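/- arXiv:1705.05169 — 10 statements merged into one kernel-verified Lean document; each statement's English description precedes it below -/
import Mathlib

section
/- Let (P, ≼, ∧) be a locally finite meet semilattice with least element 0̂, let f be a complex-valued function on P, and let S = {x_1, …, x_n} be a finite meet closed subset of P with distinct elements, indexed so that x_i ≼ x_j only if i ≤ j. Then (S)_f = E D Eᵀ, where E is the n×n matrix with E_{ij} = 1 if x_j ≼ x_i and E_{ij} = 0 otherwise, and D = diag(d_1, …, d_n) with d_i = ∑_{z ≼ x_i, z ⋠ x_j for all j < i} (f_d * μ)(0̂, z). -/
open Matrix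

/-- Let `(P, ≼, ∧)` be a locally finite meet semilattice with least
element `⊥`, `f : P → ℂ`, and `S = {x 0, …, x (n-1)}` a meet closed subset with distinct
elements indexed so that `x i ≼ x j` only if `i ≤ j`.  Then the meet matrix `(S)_f`
factors as `E * D * Eᵀ`, where `E i j = 1` iff `x j ≼ x i` and
`D = diag(d)` with `d i = ∑_{z ≼ x i, z ⋠ x j for j < i} (f_d * μ)(⊥, z)`. -/
theorem meet_matrix_factorization
    {P : Type*} [SemilatticeInf P] [OrderBot P] [LocallyFiniteOrder P]
    [DecidableRel ((· ≤ ·) : P → P → Prop)]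
    (mu : P → P → ℂ)
    (hmu_self : ∀ p, mu p p = 1)
    (hmu_lt : ∀ p q : P, p < q → mu p q = -∑ r ∈ Finset.Ico p q, mu p r)
    (hmu_nle : ∀ p q : P, ¬ p ≤ q → mu p q = 0)
    (f : P → ℂ)
    {n : ℕ} (x : Fin n → P) (hinj : Function.Injective x)
    (hord : ∀ i j, x i ≤ x j → i ≤ j)
    (hmeet : ∀ i j, ∃ k, x k = x i ⊓ x j)
    (E : Matrix (Fin n) (Fin n) ℂ)
    (hE : ∀ i j, E i j = if x j ≤ x i then 1 else 0)
    (d : Fin n → ℂ)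
    (hd : ∀ i, d i = ∑ z ∈ (Finset.Icc ⊥ (x i)).filter
        (fun z => ∀ j, j < i → ¬ z ≤ x j),
      ∑ w ∈ Finset.Icc ⊥ z, f w * mu w z) :
    (Matrix.of fun i j => f (x i ⊓ x j)) = E * Matrix.diagonal d * Eᵀ := by
  classical
  set g : P → ℂ := fun z => ∑ w ∈ Finset.Icc ⊥ z, f w * mu w z with hg
  -- Möbius inversion: summing g over the down-set of y recovers f y
  have key : ∀ y : P, ∑ z ∈ Finset.Icc ⊥ y, g z = f y := by
    intro y
    have hswap : ∑ z ∈ Finset.Icc ⊥ y, g z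
        = ∑ w ∈ Finset.Icc ⊥ y, ∑ z ∈ Finset.Icc w y, f w * mu w z := by
      simp only [hg]
      refine Finset.sum_comm' ?_
      intro z w
      simp only [Finset.mem_Icc, bot_le, true_and]
      constructor
      · rintro ⟨hzy, hwz⟩; exact ⟨⟨hwz, hzy⟩, le_trans hwz hzy⟩
      · rintro ⟨⟨hwz, hzy⟩, _⟩; exact ⟨hzy, hwz⟩
    rw [hswap]
    have hinner : ∀ w ∈ Finset.Icc ⊥ y,
        ∑ z ∈ Finset.Icc w y, f w * mu w z = if w = y then f y else 0 := by
      intro w hw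
      rw [Finset.mem_Icc] at hw
      rcases eq_or_lt_of_le hw.2 with h | h
      · subst h; simp [hmu_self]
      · rw [if_neg h.ne]
        rw [Finset.Icc_eq_cons_Ico hw.2, Finset.sum_cons, hmu_lt _ _ h,
          ← Finset.mul_sum]
        ring
    rw [Finset.sum_congr rfl hinner, Finset.sum_ite_eq' (Finset.Icc ⊥ y) y (fun _ => f y)]
    simp
  -- entrywise
  ext i j
  obtain ⟨m, hm⟩ := hmeet i j
  have hrhs : (E * Matrix.diagonal d * Eᵀ) i j
      = ∑ k ∈ Finset.univ.filter (fun k => x k ≤ x m), d k := by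
    rw [Matrix.mul_apply]
    simp only [Matrix.mul_diagonal, Matrix.transpose_apply, hE]
    rw [Finset.sum_filter]
    refine Finset.sum_congr rfl ?_
    intro k _
    by_cases h1 : x k ≤ x i <;> by_cases h2 : x k ≤ x j <;>
      simp [h1, h2, hm, le_inf_iff]
  rw [Matrix.of_apply, hrhs, ← hm]
  -- partition Icc ⊥ (x m) according to the minimal index k with z ≤ x k
  have hd' : ∀ k, d k = ∑ z ∈ (Finset.Icc ⊥ (x k)).filter
      (fun z => ∀ j, j < k → ¬ z ≤ x j), g z := hd
  simp_rw [hd']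
  rw [← key (x m)]
  rw [← Finset.sum_biUnion]
  · congr 1
    ext z
    simp only [Finset.mem_biUnion, Finset.mem_filter, Finset.mem_Icc, bot_le, true_and,
      Finset.mem_univ]
    refine ⟨?_, fun hh => by obtain ⟨k, hk, hzk, _⟩ := hh; exact le_trans hzk hk⟩
    intro hzm
    set A : Finset (Fin n) := Finset.univ.filter (fun k => z ≤ x k) with hA
    have hmA : m ∈ A := by simp [hA, hzm]
    have hAne : A.Nonempty := ⟨m, hmA⟩
    set k₀ := A.min' hAne with hk₀
    have hzk₀ : z ≤ x k₀ := by
      have := A.min'_mem hAne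
      simpa [hA] using this
    have hmin : ∀ j, j < k₀ → ¬ z ≤ x j := by
      intro j hj hzj
      have : j ∈ A := by simp [hA, hzj]
      exact absurd (A.min'_le j this) (not_le_of_gt hj)
    have hkm : x k₀ ≤ x m := by
      obtain ⟨l, hl⟩ := hmeet k₀ m
      have hzl : z ≤ x l := by rw [hl]; exact le_inf hzk₀ hzm
      have hlA : l ∈ A := by simp [hA, hzl]
      have h1 : k₀ ≤ l := A.min'_le l hlA
      have h2 : l ≤ k₀ := hord l k₀ (hl ▸ inf_le_left)
      have : l = k₀ := le_antisymm h2 h1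
      rw [← this, hl]; exact inf_le_right
    exact ⟨k₀, hkm, hzk₀, hmin⟩
  · -- disjointness
    intro a _ b _ hab
    refine Finset.disjoint_left.2 ?_
    intro z hza hzb
    simp only [Finset.mem_filter, Finset.mem_Icc] at hza hzb
    rcases lt_or_gt_of_ne hab with h | h
    · exact hzb.2 a h hza.1.2
    · exact hza.2 b h hzb.1.2
end

section
/- Let (P, ≼, ∧) be a locally finite meet semilattice with least element 0̂, let f be a real-valued function on P, and let S = {x_1, …, x_n} be a finite meet closed subset of P with distinct elements, indexed so that x_i ≼ x_j only if i ≤ j. Then the meet matrix (S)_f is positive semidefinite if and only if d_i = ∑_{z ≼ x_i, z ⋠ x_j for all j < i} (f_d * μ)(0̂, z) ≥ 0 for all i ∈ {1, …, n}, and (S)_f is positive definite if and only if d_i > 0 for all i ∈ {1, …, n}. -/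
open Matrix Finset

private lemma real_cancel {m : Type*} [Fintype m] [DecidableEq m]
    (D E : Matrix m m ℝ) (hE : IsUnit E.det) :
    E⁻¹ * (E * D * Eᵀ) * (E⁻¹)ᵀ = D := by
  rw [Matrix.transpose_nonsing_inv]
  calc E⁻¹ * (E * D * Eᵀ) * (Eᵀ)⁻¹
      = (E⁻¹ * E) * D * (Eᵀ * (Eᵀ)⁻¹) := by simp only [Matrix.mul_assoc]
    _ = D := by
        rw [Matrix.nonsing_inv_mul _ hE,
          Matrix.mul_nonsing_inv _ (by rwa [Matrix.det_transpose]), Matrix.one_mul,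
          Matrix.mul_one]

private lemma real_congr_posSemidef {m : Type*} [Fintype m] [DecidableEq m]
    {D : Matrix m m ℝ} (E : Matrix m m ℝ) (hE : IsUnit E.det) :
    (E * D * Eᵀ).PosSemidef ↔ D.PosSemidef := by
  constructor
  · intro h
    have := h.mul_mul_conjTranspose_same E⁻¹
    rwa [Matrix.conjTranspose_eq_transpose_of_trivial, real_cancel D E hE] at this
  · intro h
    have := h.mul_mul_conjTranspose_same E
    rwa [Matrix.conjTranspose_eq_transpose_of_trivial] at this

private lemma real_posDef_mul {m : Type*} [Fintype m] [DecidableEq m]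
    {D : Matrix m m ℝ} (E : Matrix m m ℝ) (hE : IsUnit E.det) (hD : D.PosDef) :
    (E * D * Eᵀ).PosDef := by
  refine Matrix.PosDef.of_dotProduct_mulVec_pos ?_ ?_
  · rw [Matrix.IsHermitian, Matrix.conjTranspose_eq_transpose_of_trivial]
    have hDsym : Dᵀ = D := by
      have := hD.isHermitian
      rwa [Matrix.IsHermitian, Matrix.conjTranspose_eq_transpose_of_trivial] at this
    rw [Matrix.transpose_mul, Matrix.transpose_mul, Matrix.transpose_transpose, hDsym,
      Matrix.mul_assoc]
  · intro v hv
    have hw : Eᵀ *ᵥ v ≠ 0 := by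
      intro h
      apply hv
      have hinj : Function.Injective (Eᵀ).mulVec :=
        Matrix.mulVec_injective_iff_isUnit.2
          ((Matrix.isUnit_iff_isUnit_det _).2 (by rwa [Matrix.det_transpose]))
      exact hinj (by simpa using h)
    have h2 := hD.dotProduct_mulVec_pos hw
    rw [star_trivial] at h2 ⊢
    have key : v ⬝ᵥ (E * D * Eᵀ) *ᵥ v = (Eᵀ *ᵥ v) ⬝ᵥ D *ᵥ (Eᵀ *ᵥ v) := by
      rw [← Matrix.mulVec_mulVec, ← Matrix.mulVec_mulVec, Matrix.dotProduct_mulVec,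
        ← Matrix.mulVec_transpose]
    rw [key]; exact h2

private lemma real_congr_posDef {m : Type*} [Fintype m] [DecidableEq m]
    {D : Matrix m m ℝ} (E : Matrix m m ℝ) (hE : IsUnit E.det) :
    (E * D * Eᵀ).PosDef ↔ D.PosDef := by
  constructor
  · intro h
    have hE' : IsUnit (E⁻¹).det := Matrix.isUnit_nonsing_inv_det E hE
    have := real_posDef_mul E⁻¹ hE' h
    rwa [real_cancel D E hE] at this
  · exact real_posDef_mul E hE

/-- For a real-valued `f` on a locally finite meet semilattice with least
element and a meet closed set `S`, the meet matrix `(S)_f` is positive semidefinite iff all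
`d i ≥ 0`, and positive definite iff all `d i > 0`, where
`d i = ∑_{z ≼ x i, z ⋠ x j for j < i} (f_d * μ)(⊥, z)`. -/
theorem meet_matrix_posSemidef_posDef_iff
    {P : Type*} [SemilatticeInf P] [OrderBot P] [LocallyFiniteOrder P]
    [DecidableRel ((· ≤ ·) : P → P → Prop)]
    (mu : P → P → ℝ)
    (hmu_self : ∀ p, mu p p = 1)
    (hmu_lt : ∀ p q : P, p < q → mu p q = -∑ r ∈ Finset.Ico p q, mu p r)
    (hmu_nle : ∀ p q : P, ¬ p ≤ q → mu p q = 0)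
    (f : P → ℝ)
    {n : ℕ} (x : Fin n → P) (hinj : Function.Injective x)
    (hord : ∀ i j, x i ≤ x j → i ≤ j)
    (hmeet : ∀ i j, ∃ k, x k = x i ⊓ x j)
    (d : Fin n → ℝ)
    (hd : ∀ i, d i = ∑ z ∈ (Finset.Icc ⊥ (x i)).filter
        (fun z => ∀ j, j < i → ¬ z ≤ x j),
      ∑ w ∈ Finset.Icc ⊥ z, f w * mu w z) :
    ((Matrix.of fun i j => f (x i ⊓ x j)).PosSemidef ↔ ∀ i, 0 ≤ d i) ∧
      ((Matrix.of fun i j => f (x i ⊓ x j)).PosDef ↔ ∀ i, 0 < d i) := by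
  classical
  set g : P → ℝ := fun z => ∑ w ∈ Finset.Icc ⊥ z, f w * mu w z with hg
  -- Möbius column sums
  have hmob : ∀ w y : P, w ≤ y → ∑ z ∈ Finset.Icc w y, mu w z = if w = y then 1 else 0 := by
    intro w y hwy
    rcases eq_or_lt_of_le hwy with rfl | hlt
    · simp [hmu_self]
    · rw [if_neg hlt.ne, ← Finset.Ico_insert_right hwy,
        Finset.sum_insert Finset.right_notMem_Ico, hmu_lt w y hlt]
      ring
  -- Möbius inversion
  have hinv : ∀ y : P, ∑ z ∈ Finset.Icc ⊥ y, g z = f y := by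
    intro y
    have hswap : ∑ z ∈ Finset.Icc ⊥ y, ∑ w ∈ Finset.Icc ⊥ z, f w * mu w z
        = ∑ w ∈ Finset.Icc ⊥ y, ∑ z ∈ Finset.Icc w y, f w * mu w z := by
      refine Finset.sum_comm' ?_
      intro z w
      simp only [Finset.mem_Icc, bot_le, true_and]
      constructor
      · rintro ⟨hzy, hwz⟩; exact ⟨⟨hwz, hzy⟩, le_trans hwz hzy⟩
      · rintro ⟨⟨hwz, hzy⟩, _⟩; exact ⟨hzy, hwz⟩
    simp only [hg]
    rw [hswap]
    have : ∀ w ∈ Finset.Icc ⊥ y, ∑ z ∈ Finset.Icc w y, f w * mu w z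
        = if w = y then f y else 0 := by
      intro w hw
      rw [Finset.mem_Icc] at hw
      rw [← Finset.mul_sum, hmob w y hw.2]
      split_ifs with h
      · rw [h, mul_one]
      · rw [mul_zero]
    rw [Finset.sum_congr rfl this, Finset.sum_ite_eq' (Finset.Icc ⊥ y) y (fun _ => f y),
      if_pos (by simp)]
  -- key decomposition
  have hkey : ∀ i j : Fin n, f (x i ⊓ x j)
      = ∑ k ∈ Finset.univ.filter (fun k => x k ≤ x i ∧ x k ≤ x j), d k := by
    intro i j
    obtain ⟨m, hm⟩ := hmeet i j
    set y := x i ⊓ x j with hy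
    set c : P → Fin n := fun z =>
      if h : (Finset.univ.filter fun k => z ≤ x k).Nonempty
      then (Finset.univ.filter fun k => z ≤ x k).min' h else m with hc
    have hcmin : ∀ z : P, ∀ k, z ≤ x k → (z ≤ x (c z) ∧ c z ≤ k) := by
      intro z k hk
      have hne : (Finset.univ.filter fun k => z ≤ x k).Nonempty :=
        ⟨k, Finset.mem_filter.mpr ⟨Finset.mem_univ k, hk⟩⟩
      have h1 := Finset.min'_mem _ hne
      have h2 := Finset.min'_le (Finset.univ.filter fun k => z ≤ x k) k (Finset.mem_filter.mpr ⟨Finset.mem_univ k, hk⟩)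
      rw [Finset.mem_filter] at h1
      constructor
      · rw [hc]; simp only [dif_pos hne]; exact h1.2
      · rw [hc]; simp only [dif_pos hne]; exact h2
    have hmaps : ∀ z ∈ Finset.Icc ⊥ y, c z ∈
        Finset.univ.filter (fun k => x k ≤ x i ∧ x k ≤ x j) := by
      intro z hz
      rw [Finset.mem_Icc] at hz
      have hzm : z ≤ x m := hm ▸ hz.2
      obtain ⟨hzc, _⟩ := hcmin z m hzm
      obtain ⟨l, hl⟩ := hmeet (c z) m
      have hzl : z ≤ x l := by rw [hl]; exact le_inf hzc hzm
      have h1 : c z ≤ l := (hcmin z l hzl).2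
      have h2 : l ≤ c z := hord l (c z) (by rw [hl]; exact inf_le_left)
      have : x (c z) ≤ x m := by
        rw [← le_antisymm h2 h1, hl]; exact inf_le_right
      rw [hm] at this
      simp only [Finset.mem_filter, Finset.mem_univ, true_and]
      exact ⟨this.trans inf_le_left, this.trans inf_le_right⟩
    have hfib := Finset.sum_fiberwise_of_maps_to hmaps g
    have hfiber : ∀ k ∈ Finset.univ.filter (fun k => x k ≤ x i ∧ x k ≤ x j),
        (Finset.Icc ⊥ y).filter (fun z => c z = k)
          = (Finset.Icc ⊥ (x k)).filter (fun z => ∀ l, l < k → ¬ z ≤ x l) := by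
      intro k hk
      rw [Finset.mem_filter] at hk
      have hky : x k ≤ y := le_inf hk.2.1 hk.2.2
      ext z
      simp only [Finset.mem_filter, Finset.mem_Icc, bot_le, true_and]
      constructor
      · rintro ⟨hzy, rfl⟩
        have hzm : z ≤ x m := hm ▸ hzy
        obtain ⟨hzc, _⟩ := hcmin z m hzm
        refine ⟨hzc, fun l hl hzl => ?_⟩
        exact absurd ((hcmin z l hzl).2) (not_le.mpr hl)
      · rintro ⟨hzk, hmin⟩
        obtain ⟨hzc, hck⟩ := hcmin z k hzk
        refine ⟨le_trans hzk hky, ?_⟩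
        rcases lt_or_eq_of_le hck with hlt | heq
        · exact absurd hzc (hmin _ hlt)
        · exact heq
    rw [← hinv y, ← hfib]
    refine Finset.sum_congr rfl fun k hk => ?_
    rw [hfiber k hk, hd k]
  -- matrix factorization
  set E : Matrix (Fin n) (Fin n) ℝ :=
    Matrix.of fun i k => if x k ≤ x i then (1 : ℝ) else 0 with hE
  have hfact : (Matrix.of fun i j => f (x i ⊓ x j)) = E * Matrix.diagonal d * Eᵀ := by
    ext i j
    rw [Matrix.mul_apply]
    simp only [Matrix.mul_diagonal, Matrix.transpose_apply, Matrix.of_apply, hE]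
    rw [hkey i j, Finset.sum_filter]
    refine Finset.sum_congr rfl fun k _ => ?_
    by_cases h1 : x k ≤ x i <;> by_cases h2 : x k ≤ x j <;> simp [h1, h2]
  have hdet : IsUnit E.det := by
    have ht : Eᵀ.BlockTriangular id := by
      intro a b hab
      simp only [Matrix.transpose_apply, hE, Matrix.of_apply]
      rw [if_neg]
      intro h
      exact absurd (hord a b h) (not_le.mpr hab)
    have : E.det = 1 := by
      rw [← Matrix.det_transpose, Matrix.det_of_upperTriangular ht]
      simp [hE]
    rw [this]; exact isUnit_one
  rw [hfact]
  constructor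
  · rw [real_congr_posSemidef E hdet]
    exact Matrix.posSemidef_diagonal_iff
  · rw [real_congr_posDef E hdet]
    exact Matrix.posDef_diagonal_iff
end

section
/- Let (P, ≼, ∧, ∨) be a lattice, let f be a semimultiplicative complex-valued function on P with f(x) ≠ 0 for all x ∈ P, and let S = {x_1, …, x_n} be a finite subset of P with distinct elements, indexed so that x_i ≼ x_j only if i ≤ j. Let R = diag(f(x_1), …, f(x_n)). Then [S]_f = R (S)_{1/f} R, i.e., f(x_i ∨ x_j) = f(x_i) · (1/f)(x_i ∧ x_j) · f(x_j) in matrix form. -/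
open Matrix

/-- If `f` is a nonvanishing semimultiplicative function on a lattice `P`
and `S = {x 0, …, x (n-1)}` has distinct elements indexed so that `x i ≼ x j` only if
`i ≤ j`, then the join matrix `[S]_f` equals `R * (S)_{1/f} * R`, where
`R = diag(f (x 0), …, f (x (n-1)))`. -/
theorem join_matrix_eq_R_meet_R
    {P : Type*} [Lattice P]
    (f : P → ℂ) (hf : ∀ p, f p ≠ 0)
    (hsemi : ∀ p q : P, f (p ⊓ q) * f (p ⊔ q) = f p * f q)
    {n : ℕ} (x : Fin n → P) (hinj : Function.Injective x)
    (hord : ∀ i j, x i ≤ x j → i ≤ j) :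
    (Matrix.of fun i j => f (x i ⊔ x j)) =
      Matrix.diagonal (fun i => f (x i)) *
        (Matrix.of fun i j => (f (x i ⊓ x j))⁻¹) *
        Matrix.diagonal (fun i => f (x i)) := by
  ext i j
  simp only [Matrix.mul_apply, Matrix.diagonal_apply, Matrix.of_apply]
  rw [Finset.sum_eq_single j, Finset.sum_eq_single i] <;>
    try (intro b _ hb; simp [hb, Ne.symm hb])
  · simp only [if_pos rfl, if_true]
    have h : f (x i) * (f (x i ⊓ x j))⁻¹ * f (x j) = f (x i) * f (x j) / f (x i ⊓ x j) := by
      ring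
    rw [h, eq_div_iff (hf _)]
    linear_combination hsemi (x i) (x j)
  · intro h; exact absurd (Finset.mem_univ i) h
  · intro h; exact absurd (Finset.mem_univ j) h
end

section
/- Let (P, ≼, ∧, ∨) be a locally finite lattice with least element 0̂, let f be a semimultiplicative complex-valued function on P with f(x) ≠ 0 for all x ∈ P, set g(x) = 1/f(x), and let S = {x_1, …, x_n} be a finite meet closed subset of P with distinct elements, indexed so that x_i ≼ x_j only if i ≤ j. Assume l_i = ∑_{z ≼ x_i, z ⋠ x_j for all j < i} (g_d * μ)(0̂, z) ≠ 0 for all i ∈ {1, …, n}. Then for every λ ∈ ℂ: there exists a nonzero x ∈ ℂⁿ with (S)_f x = λ [S]_f x if and only if there exists a nonzero y ∈ ℂⁿ with L⁻¹ A y = λ y, where L = diag(l_1, …, l_n), A = (RE)⁻¹ (S)_f (Eᵀ R)⁻¹, R = diag(f(x_1), …, f(x_n)), and E is the n×n matrix with E_{ij} = 1 if x_j ≼ x_i and E_{ij} = 0 otherwise. -/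
open Matrix

/-- Under invertibility of the join matrix (encoded by `l i ≠ 0`), the
`[S]_f`-eigenvalues of `(S)_f` are precisely the eigenvalues of `L⁻¹ * A`, where
`L = diag(l)`, `A = (R * E)⁻¹ * (S)_f * (Eᵀ * R)⁻¹`, `R = diag(f ∘ x)` and
`E i j = 1` iff `x j ≼ x i`. -/
theorem generalized_eigenvalues_meet_wrt_join
    {P : Type*} [Lattice P] [OrderBot P] [LocallyFiniteOrder P]
    [DecidableRel ((· ≤ ·) : P → P → Prop)]
    (mu : P → P → ℂ)
    (hmu_self : ∀ p, mu p p = 1)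
    (hmu_lt : ∀ p q : P, p < q → mu p q = -∑ r ∈ Finset.Ico p q, mu p r)
    (hmu_nle : ∀ p q : P, ¬ p ≤ q → mu p q = 0)
    (f : P → ℂ) (hf : ∀ p, f p ≠ 0)
    (hsemi : ∀ p q : P, f (p ⊓ q) * f (p ⊔ q) = f p * f q)
    (g : P → ℂ) (hg : ∀ p, g p = (f p)⁻¹)
    {n : ℕ} (x : Fin n → P) (hinj : Function.Injective x)
    (hord : ∀ i j, x i ≤ x j → i ≤ j)
    (hmeet : ∀ i j, ∃ k, x k = x i ⊓ x j)
    (l : Fin n → ℂ)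
    (hl : ∀ i, l i = ∑ z ∈ (Finset.Icc ⊥ (x i)).filter
        (fun z => ∀ j, j < i → ¬ z ≤ x j),
      ∑ w ∈ Finset.Icc ⊥ z, g w * mu w z)
    (hl0 : ∀ i, l i ≠ 0)
    (E : Matrix (Fin n) (Fin n) ℂ)
    (hE : ∀ i j, E i j = if x j ≤ x i then 1 else 0)
    (L R A : Matrix (Fin n) (Fin n) ℂ)
    (hL : L = Matrix.diagonal l)
    (hR : R = Matrix.diagonal (fun i => f (x i)))
    (hA : A = (R * E)⁻¹ * (Matrix.of fun i j => f (x i ⊓ x j)) * (Eᵀ * R)⁻¹) :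
    ∀ lam : ℂ,
      (∃ v : Fin n → ℂ, v ≠ 0 ∧
          (Matrix.of fun i j => f (x i ⊓ x j)).mulVec v =
            lam • (Matrix.of fun i j => f (x i ⊔ x j)).mulVec v) ↔
        (∃ y : Fin n → ℂ, y ≠ 0 ∧ (L⁻¹ * A).mulVec y = lam • y) := by
  intro lam
  classical
  -- Möbius sum over an interval
  have hmusum : ∀ w t : P, w ≤ t →
      (∑ z ∈ Finset.Icc w t, mu w z) = if w = t then 1 else 0 := by
    intro w t hwt
    rcases eq_or_lt_of_le hwt with rfl | hlt
    · simp [hmu_self]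
    · rw [if_neg (ne_of_lt hlt), ← Finset.Ico_insert_right hwt,
        Finset.sum_insert Finset.right_notMem_Ico, hmu_lt w t hlt]
      ring
  -- Möbius inversion for g
  have hginv : ∀ t : P,
      (∑ z ∈ Finset.Icc ⊥ t, ∑ w ∈ Finset.Icc ⊥ z, g w * mu w z) = g t := by
    intro t
    have h1 : ∀ z ∈ Finset.Icc ⊥ t, (∑ w ∈ Finset.Icc ⊥ z, g w * mu w z)
        = ∑ w ∈ Finset.Icc ⊥ t, g w * mu w z := by
      intro z hz
      refine Finset.sum_subset ?_ ?_
      · intro w hw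
        simp only [Finset.mem_Icc] at *
        exact ⟨bot_le, le_trans hw.2 hz.2⟩
      · intro w _ hw'
        have hwz : ¬ w ≤ z := by
          simp only [Finset.mem_Icc, bot_le, true_and] at hw'
          exact hw'
        rw [hmu_nle w z hwz, mul_zero]
    rw [Finset.sum_congr rfl h1, Finset.sum_comm]
    have h2 : ∀ w ∈ Finset.Icc ⊥ t, (∑ z ∈ Finset.Icc ⊥ t, g w * mu w z)
        = if w = t then g w else 0 := by
      intro w hw
      have hwt : w ≤ t := by simpa using (Finset.mem_Icc.mp hw).2
      rw [← Finset.mul_sum]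
      have h3 : (∑ z ∈ Finset.Icc ⊥ t, mu w z) = ∑ z ∈ Finset.Icc w t, mu w z := by
        refine (Finset.sum_subset ?_ ?_).symm
        · intro z hz
          simp only [Finset.mem_Icc] at *
          exact ⟨bot_le, hz.2⟩
        · intro z hz hz'
          have hzt : z ≤ t := (Finset.mem_Icc.mp hz).2
          exact hmu_nle w z (fun h => hz' (Finset.mem_Icc.mpr ⟨h, hzt⟩))
      rw [h3, hmusum w t hwt]
      split <;> simp
    rw [Finset.sum_congr rfl h2, Finset.sum_ite_eq' (Finset.Icc ⊥ t) t g]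
    simp
  -- partition: sum of l over indices below x t equals g (x t)
  have key : ∀ t : Fin n,
      (∑ k ∈ Finset.univ.filter (fun k => x k ≤ x t), l k) = g (x t) := by
    intro t
    have hun : (Finset.univ.filter (fun k => x k ≤ x t)).biUnion
        (fun k => (Finset.Icc ⊥ (x k)).filter (fun z => ∀ j, j < k → ¬ z ≤ x j))
        = Finset.Icc ⊥ (x t) := by
      ext z
      simp only [Finset.mem_biUnion, Finset.mem_filter, Finset.mem_univ, true_and,
        Finset.mem_Icc, bot_le]
      constructor
      · rintro ⟨k, hkt, hzk, -⟩
        exact le_trans hzk hkt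
      · intro hzt
        have hne : (Finset.univ.filter (fun k => z ≤ x k)).Nonempty :=
          ⟨t, by simp [hzt]⟩
        set k := (Finset.univ.filter (fun k => z ≤ x k)).min' hne with hk
        have hzk : z ≤ x k := by
          have := (Finset.univ.filter (fun k => z ≤ x k)).min'_mem hne
          simpa using this
        have hmin : ∀ j, j < k → ¬ z ≤ x j := by
          intro j hj hzj
          exact absurd ((Finset.univ.filter (fun k => z ≤ x k)).min'_le j (by simp [hzj]))
            (not_le.mpr hj)
        obtain ⟨m, hm⟩ := hmeet k t
        have hzm : z ≤ x m := by rw [hm]; exact le_inf hzk hzt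
        have hkm : k ≤ m := (Finset.univ.filter (fun k => z ≤ x k)).min'_le m (by simp [hzm])
        have hmk : m ≤ k := hord m k (by rw [hm]; exact inf_le_left)
        have hmke : m = k := le_antisymm hmk hkm
        have hxkt : x k ≤ x t := by rw [← hmke, hm]; exact inf_le_right
        exact ⟨k, hxkt, hzk, hmin⟩
    have hdisj : (↑(Finset.univ.filter (fun k => x k ≤ x t)) : Set (Fin n)).PairwiseDisjoint
        (fun k => (Finset.Icc ⊥ (x k)).filter (fun z => ∀ j, j < k → ¬ z ≤ x j)) := by
      intro a _ b _ hab
      apply Finset.disjoint_left.mpr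
      intro z hza hzb
      simp only [Finset.mem_filter, Finset.mem_Icc] at hza hzb
      rcases lt_or_gt_of_ne hab with h | h
      · exact hzb.2 a h hza.1.2
      · exact hza.2 b h hzb.1.2
    calc (∑ k ∈ Finset.univ.filter (fun k => x k ≤ x t), l k)
        = ∑ k ∈ Finset.univ.filter (fun k => x k ≤ x t),
            ∑ z ∈ (Finset.Icc ⊥ (x k)).filter (fun z => ∀ j, j < k → ¬ z ≤ x j),
              ∑ w ∈ Finset.Icc ⊥ z, g w * mu w z :=
          Finset.sum_congr rfl (fun k _ => hl k)
      _ = ∑ z ∈ (Finset.univ.filter (fun k => x k ≤ x t)).biUnion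
            (fun k => (Finset.Icc ⊥ (x k)).filter (fun z => ∀ j, j < k → ¬ z ≤ x j)),
              ∑ w ∈ Finset.Icc ⊥ z, g w * mu w z := (Finset.sum_biUnion hdisj).symm
      _ = g (x t) := by rw [hun]; exact hginv (x t)
  -- factorization of the join matrix
  have hNfact : (Matrix.of fun i j => f (x i ⊔ x j)) = (R * E) * L * (Eᵀ * R) := by
    ext i j
    rw [hR, hL]
    rw [Matrix.mul_apply]
    simp only [Matrix.mul_diagonal, Matrix.diagonal_mul, Matrix.transpose_apply,
      Matrix.of_apply]
    obtain ⟨m, hm⟩ := hmeet i j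
    have hterm : ∀ k, f (x i) * E i k * l k * (E j k * f (x j))
        = f (x i) * f (x j) * (if x k ≤ x m then l k else 0) := by
      intro k
      rw [hE, hE]
      have : (x k ≤ x m) ↔ (x k ≤ x i ∧ x k ≤ x j) := by rw [hm, le_inf_iff]
      by_cases h1 : x k ≤ x i <;> by_cases h2 : x k ≤ x j <;>
        simp [h1, h2, this] <;> ring
    rw [Finset.sum_congr rfl (fun k _ => hterm k), ← Finset.mul_sum,
      ← Finset.sum_filter, key m, hg, hm]
    have h0 := hf (x i ⊓ x j)
    field_simp
    linear_combination hsemi (x i) (x j)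
  -- invertibility
  have hdetE : IsUnit E.det := by
    have hBT : Eᵀ.BlockTriangular id := by
      intro i j hij
      show E j i = 0
      rw [hE, if_neg]
      intro h
      exact absurd (hord i j h) (not_le.mpr hij)
    have hdet1 : E.det = 1 := by
      rw [← Matrix.det_transpose, Matrix.det_of_upperTriangular hBT]
      simp [Matrix.transpose_apply, hE]
    rw [hdet1]; exact isUnit_one
  have hdetR : IsUnit R.det := by
    rw [hR, Matrix.det_diagonal]
    exact isUnit_iff_ne_zero.mpr (Finset.prod_ne_zero_iff.mpr fun i _ => hf (x i))
  have hdetL : IsUnit L.det := by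
    rw [hL, Matrix.det_diagonal]
    exact isUnit_iff_ne_zero.mpr (Finset.prod_ne_zero_iff.mpr fun i _ => hl0 i)
  have hdetB : IsUnit (R * E).det := by rw [Matrix.det_mul]; exact hdetR.mul hdetE
  have hdetC : IsUnit (Eᵀ * R).det := by
    rw [Matrix.det_mul, Matrix.det_transpose]; exact hdetE.mul hdetR
  have hB1 : (R * E)⁻¹ * (R * E) = 1 := Matrix.nonsing_inv_mul _ hdetB
  have hB2 : (R * E) * (R * E)⁻¹ = 1 := Matrix.mul_nonsing_inv _ hdetB
  have hC1 : (Eᵀ * R)⁻¹ * (Eᵀ * R) = 1 := Matrix.nonsing_inv_mul _ hdetC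
  have hC2 : (Eᵀ * R) * (Eᵀ * R)⁻¹ = 1 := Matrix.mul_nonsing_inv _ hdetC
  have hL1 : L⁻¹ * L = 1 := Matrix.nonsing_inv_mul _ hdetL
  have hL2 : L * L⁻¹ = 1 := Matrix.mul_nonsing_inv _ hdetL
  have hB1' : ∀ X : Matrix (Fin n) (Fin n) ℂ, (R * E)⁻¹ * ((R * E) * X) = X := fun X => by
    rw [← Matrix.mul_assoc, hB1, Matrix.one_mul]
  have hB2' : ∀ X : Matrix (Fin n) (Fin n) ℂ, (R * E) * ((R * E)⁻¹ * X) = X := fun X => by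
    rw [← Matrix.mul_assoc, hB2, Matrix.one_mul]
  have hL1' : ∀ X : Matrix (Fin n) (Fin n) ℂ, L⁻¹ * (L * X) = X := fun X => by
    rw [← Matrix.mul_assoc, hL1, Matrix.one_mul]
  have hL2' : ∀ X : Matrix (Fin n) (Fin n) ℂ, L * (L⁻¹ * X) = X := fun X => by
    rw [← Matrix.mul_assoc, hL2, Matrix.one_mul]
  set M : Matrix (Fin n) (Fin n) ℂ := Matrix.of fun i j => f (x i ⊓ x j) with hMdef
  set N : Matrix (Fin n) (Fin n) ℂ := Matrix.of fun i j => f (x i ⊔ x j) with hNdef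
  -- key matrix identities
  have e1 : L⁻¹ * A * (Eᵀ * R) = L⁻¹ * ((R * E)⁻¹ * M) := by
    rw [hA]
    simp only [Matrix.mul_assoc, hC1, Matrix.mul_one]
  have e2 : L⁻¹ * ((R * E)⁻¹ * N) = Eᵀ * R := by
    rw [hNfact, Matrix.mul_assoc (R * E) L (Eᵀ * R), hB1', hL1']
  have e3 : (R * E) * L * (L⁻¹ * A) = M * (Eᵀ * R)⁻¹ := by
    rw [Matrix.mul_assoc (R * E) L, hL2', hA, Matrix.mul_assoc ((R * E)⁻¹) M, hB2']
  have e4 : N * (Eᵀ * R)⁻¹ = (R * E) * L := by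
    rw [hNfact, Matrix.mul_assoc ((R * E) * L) (Eᵀ * R), hC2, Matrix.mul_one]
  constructor
  · rintro ⟨v, hv, heig⟩
    refine ⟨(Eᵀ * R).mulVec v, ?_, ?_⟩
    · intro h0
      apply hv
      have h1 := congrArg (fun w => ((Eᵀ * R)⁻¹).mulVec w) h0
      simpa [Matrix.mulVec_mulVec, hC1] using h1
    · rw [Matrix.mulVec_mulVec, e1, ← Matrix.mul_assoc, ← Matrix.mulVec_mulVec,
        heig, Matrix.mulVec_smul, Matrix.mulVec_mulVec, Matrix.mul_assoc, e2]
  · rintro ⟨y, hy, heig⟩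
    refine ⟨((Eᵀ * R)⁻¹).mulVec y, ?_, ?_⟩
    · intro h0
      apply hy
      have h1 := congrArg (fun w => (Eᵀ * R).mulVec w) h0
      simpa [Matrix.mulVec_mulVec, hC2] using h1
    · rw [Matrix.mulVec_mulVec, Matrix.mulVec_mulVec, e4, ← e3, ← Matrix.mulVec_mulVec,
        heig, Matrix.mulVec_smul]
end

section
/- Let (P, ≼, ∧, ∨) be a locally finite lattice with least element 0̂, let f be a semimultiplicative complex-valued function on P with f(x) ≠ 0 for all x ∈ P, set g(x) = 1/f(x), and let S = {x_1, …, x_n} be a finite meet closed subset of P with distinct elements, indexed so that x_i ≼ x_j only if i ≤ j. Assume l_i = ∑_{z ≼ x_i, z ⋠ x_j for all j < i} (g_d * μ)(0̂, z) ≠ 0 and d_i = ∑_{z ≼ x_i, z ⋠ x_j for all j < i} (f_d * μ)(0̂, z) ≠ 0 for all i. Then every [S]_f-eigenvalue λ ∈ ℂ of (S)_f satisfies |λ| ≥ (m_f · M_g⁻¹ · C_n⁻¹ · c_n) / (max_{1≤i≤n} |f(x_i)|²), where m_f = min_{1≤i≤n} |d_i| and M_g = max_{1≤i≤n} |l_i|.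 -/
open Matrix

/-- `K n` : the set of `n × n` real lower triangular `0,1`-matrices with unit diagonal. -/
def MemKn {n : ℕ} (X : Matrix (Fin n) (Fin n) ℝ) : Prop :=
  (∀ i j, i < j → X i j = 0) ∧ (∀ i j, X i j = 0 ∨ X i j = 1) ∧ (∀ i, X i i = 1)

/-- The smallest eigenvalue of the (Hermitian) matrix `X * Xᴴ`. -/
noncomputable def gramMinEig {n : ℕ} (X : Matrix (Fin n) (Fin n) ℝ) : ℝ :=
  ⨅ i, (Matrix.isHermitian_mul_conjTranspose_self X).eigenvalues i

/-- The largest eigenvalue of the (Hermitian) matrix `X * Xᴴ`. -/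
noncomputable def gramMaxEig {n : ℕ} (X : Matrix (Fin n) (Fin n) ℝ) : ℝ :=
  ⨆ i, (Matrix.isHermitian_mul_conjTranspose_self X).eigenvalues i

/-- `c n` : the minimum over `X ∈ K n` of the smallest eigenvalue of `X Xᵀ`. -/
noncomputable def cKn (n : ℕ) : ℝ :=
  ⨅ X : {X : Matrix (Fin n) (Fin n) ℝ // MemKn X}, gramMinEig X.1

/-- `C n` : the maximum over `X ∈ K n` of the largest eigenvalue of `X Xᵀ`. -/
noncomputable def CKn (n : ℕ) : ℝ :=
  ⨆ X : {X : Matrix (Fin n) (Fin n) ℝ // MemKn X}, gramMaxEig X.1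


variable {n : ℕ}

/-- quadratic form via spectral theorem, real case -/
lemma rayleigh_aux (R : Matrix (Fin n) (Fin n) ℝ) (hR : R.IsHermitian) (u : Fin n → ℝ) :
    ∃ w : Fin n → ℝ, w ⬝ᵥ w = u ⬝ᵥ u ∧
      u ⬝ᵥ (R *ᵥ u) = ∑ i, hR.eigenvalues i * (w i * w i) := by
  set U : Matrix (Fin n) (Fin n) ℝ := (hR.eigenvectorUnitary : Matrix (Fin n) (Fin n) ℝ) with hU
  have hstar : star U = Uᵀ := by
    rw [Matrix.star_eq_conjTranspose, Matrix.conjTranspose_eq_transpose_of_trivial]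
  have hUU : U * star U = 1 := (Matrix.mem_unitaryGroup_iff).mp hR.eigenvectorUnitary.2
  refine ⟨star U *ᵥ u, ?_, ?_⟩
  · have h1 : star U *ᵥ u = u ᵥ* U := by rw [hstar, Matrix.mulVec_transpose]
    nth_rewrite 1 [h1]
    rw [dotProduct_mulVec, Matrix.vecMul_vecMul, hUU, Matrix.vecMul_one]
  · conv_lhs => rw [hR.spectral_theorem]
    rw [Unitary.conjStarAlgAut_apply]
    rw [← hU]
    rw [← Matrix.mulVec_mulVec, ← Matrix.mulVec_mulVec, dotProduct_mulVec (v := u) (A := U)]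
    have h1 : u ᵥ* U = star U *ᵥ u := by rw [hstar, Matrix.mulVec_transpose]
    rw [h1]
    simp only [dotProduct, Matrix.mulVec_diagonal]
    congr 1
    ext i
    simp [RCLike.ofReal_real_eq_id]
    ring

lemma rayleigh_bounds (R : Matrix (Fin n) (Fin n) ℝ) (hR : R.IsHermitian) (u : Fin n → ℝ) :
    (⨅ i, hR.eigenvalues i) * (u ⬝ᵥ u) ≤ u ⬝ᵥ (R *ᵥ u) ∧
      u ⬝ᵥ (R *ᵥ u) ≤ (⨆ i, hR.eigenvalues i) * (u ⬝ᵥ u) := by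
  obtain ⟨w, hw, hq⟩ := rayleigh_aux R hR u
  have hbdd : BddAbove (Set.range hR.eigenvalues) := (Set.finite_range _).bddAbove
  have hbdd' : BddBelow (Set.range hR.eigenvalues) := (Set.finite_range _).bddBelow
  have hww : ∀ i, (0:ℝ) ≤ w i * w i := fun i => mul_self_nonneg _
  constructor
  · rw [hq, ← hw]
    rw [dotProduct, Finset.mul_sum]
    refine Finset.sum_le_sum fun i _ => ?_
    exact mul_le_mul_of_nonneg_right (ciInf_le hbdd' i) (hww i)
  · rw [hq, ← hw]
    rw [dotProduct, Finset.mul_sum]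
    refine Finset.sum_le_sum fun i _ => ?_
    exact mul_le_mul_of_nonneg_right (le_ciSup hbdd i) (hww i)

lemma eigen_attained (R : Matrix (Fin n) (Fin n) ℝ) (hR : R.IsHermitian) (i : Fin n) :
    ∃ u : Fin n → ℝ, u ⬝ᵥ u = 1 ∧ R *ᵥ u = hR.eigenvalues i • u := by
  refine ⟨⇑(hR.eigenvectorBasis i), ?_, hR.mulVec_eigenvectorBasis i⟩
  have h1 : ‖hR.eigenvectorBasis i‖ = 1 := hR.eigenvectorBasis.orthonormal.1 i
  have h2 : (inner ℝ (hR.eigenvectorBasis i) (hR.eigenvectorBasis i) : ℝ) = 1 := by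
    rw [real_inner_self_eq_norm_sq, h1]; norm_num
  rw [← h2]
  rw [PiLp.inner_apply]
  simp [dotProduct, RCLike.inner_apply, mul_comm, sq]

lemma dot_self_pos {u : Fin n → ℝ} (hu : u ≠ 0) : 0 < u ⬝ᵥ u := by
  obtain ⟨i, hi⟩ := Function.ne_iff.mp hu
  rw [dotProduct]
  refine Finset.sum_pos' (fun j _ => mul_self_nonneg _) ⟨i, Finset.mem_univ i, mul_self_pos.mpr hi⟩

lemma eig_transfer (X : Matrix (Fin n) (Fin n) ℝ) (hX : Function.Injective X.mulVec)
    (i : Fin n) :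
    gramMinEig X ≤ (Matrix.isHermitian_conjTranspose_mul_self X).eigenvalues i ∧
      (Matrix.isHermitian_conjTranspose_mul_self X).eigenvalues i ≤ gramMaxEig X := by
  set lam := (Matrix.isHermitian_conjTranspose_mul_self X).eigenvalues i with hlam
  obtain ⟨u, hu1, hu2⟩ := eigen_attained _ (Matrix.isHermitian_conjTranspose_mul_self X) i
  have hu0 : u ≠ 0 := by
    rintro rfl
    simp [dotProduct] at hu1
  set w : Fin n → ℝ := X *ᵥ u with hw
  have hw0 : w ≠ 0 := fun h => hu0 (hX (by simpa [Matrix.mulVec_zero] using h))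
  have hwev : (X * Xᴴ) *ᵥ w = lam • w := by
    rw [hw, Matrix.mulVec_mulVec]
    have h2 : (X * Xᴴ * X) *ᵥ u = X *ᵥ ((Xᴴ * X) *ᵥ u) := by
      rw [Matrix.mulVec_mulVec, Matrix.mul_assoc]
    rw [h2, hu2, Matrix.mulVec_smul]
  have hq : w ⬝ᵥ ((X * Xᴴ) *ᵥ w) = lam * (w ⬝ᵥ w) := by
    rw [hwev, dotProduct_smul, smul_eq_mul]
  have hpos : 0 < w ⬝ᵥ w := dot_self_pos hw0
  have hb := rayleigh_bounds _ (Matrix.isHermitian_mul_conjTranspose_self X) w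
  constructor
  · have := hb.1
    rw [hq] at this
    exact le_of_mul_le_mul_right (by exact this) hpos
  · have := hb.2
    rw [hq] at this
    exact le_of_mul_le_mul_right (by exact this) hpos

lemma real_bounds_Xt (X : Matrix (Fin n) (Fin n) ℝ) (u : Fin n → ℝ) :
    gramMinEig X * (u ⬝ᵥ u) ≤ (Xᵀ *ᵥ u) ⬝ᵥ (Xᵀ *ᵥ u) ∧
      (Xᵀ *ᵥ u) ⬝ᵥ (Xᵀ *ᵥ u) ≤ gramMaxEig X * (u ⬝ᵥ u) := by
  have key : u ⬝ᵥ ((X * Xᴴ) *ᵥ u) = (Xᵀ *ᵥ u) ⬝ᵥ (Xᵀ *ᵥ u) := by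
    rw [← Matrix.mulVec_mulVec, dotProduct_mulVec,
      Matrix.conjTranspose_eq_transpose_of_trivial, Matrix.mulVec_transpose]
  have hb := rayleigh_bounds _ (Matrix.isHermitian_mul_conjTranspose_self X) u
  rw [key] at hb
  exact hb

lemma real_bounds_X (hn : 0 < n) (X : Matrix (Fin n) (Fin n) ℝ) (hX : Function.Injective X.mulVec)
    (u : Fin n → ℝ) :
    gramMinEig X * (u ⬝ᵥ u) ≤ (X *ᵥ u) ⬝ᵥ (X *ᵥ u) ∧
      (X *ᵥ u) ⬝ᵥ (X *ᵥ u) ≤ gramMaxEig X * (u ⬝ᵥ u) := by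
  have key : u ⬝ᵥ ((Xᴴ * X) *ᵥ u) = (X *ᵥ u) ⬝ᵥ (X *ᵥ u) := by
    rw [← Matrix.mulVec_mulVec, dotProduct_mulVec,
      Matrix.conjTranspose_eq_transpose_of_trivial, Matrix.vecMul_transpose]
  have : Nonempty (Fin n) := ⟨⟨0, hn⟩⟩
  have hb := rayleigh_bounds _ (Matrix.isHermitian_conjTranspose_mul_self X) u
  rw [key] at hb
  have huu : 0 ≤ u ⬝ᵥ u := by
    rw [dotProduct]; exact Finset.sum_nonneg fun j _ => mul_self_nonneg _
  have hbdd : BddAbove (Set.range (Matrix.isHermitian_conjTranspose_mul_self X).eigenvalues) :=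
    (Set.finite_range _).bddAbove
  have hbdd' : BddBelow (Set.range (Matrix.isHermitian_conjTranspose_mul_self X).eigenvalues) :=
    (Set.finite_range _).bddBelow
  constructor
  · refine le_trans (mul_le_mul_of_nonneg_right ?_ huu) hb.1
    exact le_ciInf fun i => (eig_transfer X hX i).1
  · refine le_trans hb.2 (mul_le_mul_of_nonneg_right ?_ huu)
    exact ciSup_le fun i => (eig_transfer X hX i).2

noncomputable def qc {n : ℕ} (v : Fin n → ℂ) : ℝ := ∑ i, Complex.normSq (v i)

lemma qc_nonneg (v : Fin n → ℂ) : 0 ≤ qc v :=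
  Finset.sum_nonneg fun i _ => Complex.normSq_nonneg _

lemma qc_pos {v : Fin n → ℂ} (hv : v ≠ 0) : 0 < qc v := by
  obtain ⟨i, hi⟩ := Function.ne_iff.mp hv
  exact Finset.sum_pos' (fun j _ => Complex.normSq_nonneg _)
    ⟨i, Finset.mem_univ i, Complex.normSq_pos.mpr hi⟩

lemma qc_eq_re_im (v : Fin n → ℂ) :
    qc v = (fun j => (v j).re) ⬝ᵥ (fun j => (v j).re) +
      (fun j => (v j).im) ⬝ᵥ (fun j => (v j).im) := by
  rw [qc, dotProduct, dotProduct, ← Finset.sum_add_distrib]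
  exact Finset.sum_congr rfl fun i _ => by rw [Complex.normSq_apply]

lemma map_mulVec_re_im (Y : Matrix (Fin n) (Fin n) ℝ) (v : Fin n → ℂ) (i : Fin n) :
    (((Y.map Complex.ofReal) *ᵥ v) i).re = (Y *ᵥ fun j => (v j).re) i ∧
      (((Y.map Complex.ofReal) *ᵥ v) i).im = (Y *ᵥ fun j => (v j).im) i := by
  simp only [Matrix.mulVec, dotProduct, Matrix.map_apply, Complex.re_sum, Complex.im_sum]
  constructor <;> exact Finset.sum_congr rfl fun j _ => by simp

lemma qc_map_mulVec (Y : Matrix (Fin n) (Fin n) ℝ) (v : Fin n → ℂ) :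
    qc ((Y.map Complex.ofReal) *ᵥ v) =
      (Y *ᵥ fun j => (v j).re) ⬝ᵥ (Y *ᵥ fun j => (v j).re) +
      (Y *ᵥ fun j => (v j).im) ⬝ᵥ (Y *ᵥ fun j => (v j).im) := by
  rw [qc_eq_re_im]
  have h1 : (fun i => ((Y.map Complex.ofReal *ᵥ v) i).re) = Y *ᵥ fun j => (v j).re := by
    ext i; exact (map_mulVec_re_im Y v i).1
  have h2 : (fun i => ((Y.map Complex.ofReal *ᵥ v) i).im) = Y *ᵥ fun j => (v j).im := by
    ext i; exact (map_mulVec_re_im Y v i).2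
  rw [h1, h2]

lemma qc_bounds_of_real (Y : Matrix (Fin n) (Fin n) ℝ) (c C : ℝ)
    (h : ∀ u : Fin n → ℝ, c * (u ⬝ᵥ u) ≤ (Y *ᵥ u) ⬝ᵥ (Y *ᵥ u) ∧
      (Y *ᵥ u) ⬝ᵥ (Y *ᵥ u) ≤ C * (u ⬝ᵥ u)) (v : Fin n → ℂ) :
    c * qc v ≤ qc ((Y.map Complex.ofReal) *ᵥ v) ∧
      qc ((Y.map Complex.ofReal) *ᵥ v) ≤ C * qc v := by
  rw [qc_map_mulVec, qc_eq_re_im]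
  obtain ⟨h1, h2⟩ := h (fun j => (v j).re)
  obtain ⟨h3, h4⟩ := h (fun j => (v j).im)
  constructor
  · rw [mul_add]; exact add_le_add h1 h3
  · rw [mul_add]; exact add_le_add h2 h4

lemma qc_diagonal_le (c : Fin n → ℂ) (M : ℝ) (hM : ∀ i, ‖c i‖ ≤ M)
    (v : Fin n → ℂ) : qc ((Matrix.diagonal c) *ᵥ v) ≤ (M * M) * qc v := by
  rw [qc, qc, Finset.mul_sum]
  refine Finset.sum_le_sum fun i _ => ?_
  rw [Matrix.mulVec_diagonal, Complex.normSq_mul]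
  have h0 : 0 ≤ M := le_trans (norm_nonneg _) (hM i)
  have : Complex.normSq (c i) ≤ M * M := by
    rw [← Complex.sq_norm, sq]
    exact mul_le_mul (hM i) (hM i) (norm_nonneg _) h0
  exact mul_le_mul_of_nonneg_right this (Complex.normSq_nonneg _)

lemma qc_diagonal_ge (c : Fin n → ℂ) (m : ℝ) (hm0 : 0 ≤ m) (hm : ∀ i, m ≤ ‖c i‖)
    (v : Fin n → ℂ) : (m * m) * qc v ≤ qc ((Matrix.diagonal c) *ᵥ v) := by
  rw [qc, qc, Finset.mul_sum]
  refine Finset.sum_le_sum fun i _ => ?_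
  rw [Matrix.mulVec_diagonal, Complex.normSq_mul]
  have : m * m ≤ Complex.normSq (c i) := by
    rw [← Complex.sq_norm, sq]
    exact mul_le_mul (hm i) (hm i) hm0 (norm_nonneg _)
  exact mul_le_mul_of_nonneg_right this (Complex.normSq_nonneg _)

lemma qc_smul (a : ℂ) (v : Fin n → ℂ) : qc (a • v) = Complex.normSq a * qc v := by
  rw [qc, qc, Finset.mul_sum]
  exact Finset.sum_congr rfl fun i _ => by
    simp [Complex.normSq_mul]

lemma unitriang_inj (X : Matrix (Fin n) (Fin n) ℝ)
    (h1 : ∀ i j, i < j → X i j = 0) (h3 : ∀ i, X i i = 1) :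
    Function.Injective X.mulVec := by
  have ker : ∀ u : Fin n → ℝ, X *ᵥ u = 0 → u = 0 := by
    intro u hu
    have key : ∀ m : ℕ, ∀ hm : m < n, u ⟨m, hm⟩ = 0 := by
      intro m
      induction m using Nat.strong_induction_on with
      | _ m IH =>
        intro hm
        set i : Fin n := ⟨m, hm⟩ with hidef
        have h0 : (X *ᵥ u) i = 0 := by rw [hu]; rfl
        have heq : (X *ᵥ u) i = u i := by
          rw [Matrix.mulVec, dotProduct]
          rw [Finset.sum_eq_single i]
          · rw [h3 i, one_mul]
          · intro j _ hj
            rcases lt_or_gt_of_ne hj with h | h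
            · have hjv : (j : ℕ) < m := h
              have : u j = 0 := by
                have := IH j hjv j.isLt
                simpa [Fin.eta] using this
              rw [this, mul_zero]
            · rw [h1 i j h, zero_mul]
          · intro h; exact absurd (Finset.mem_univ i) h
        rw [heq] at h0
        exact h0
    funext i
    have := key i.val i.isLt
    simpa [Fin.eta] using this
  intro u w h
  have : X *ᵥ (u - w) = 0 := by rw [Matrix.mulVec_sub, h, sub_self]
  have := ker _ this
  exact sub_eq_zero.mp this

lemma gramMaxEig_ge_one (hn : 0 < n) (X : Matrix (Fin n) (Fin n) ℝ) (h3 : ∀ i, X i i = 1) :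
    1 ≤ gramMaxEig X := by
  set i₀ : Fin n := ⟨0, hn⟩
  set u : Fin n → ℝ := Pi.single i₀ 1 with hu
  have huu : u ⬝ᵥ u = 1 := by
    simp [hu, dotProduct, Pi.single_apply]
  have hXu : ∀ i, (Xᵀ *ᵥ u) i = X i₀ i := by
    intro i
    simp [hu, Matrix.mulVec, dotProduct, Pi.single_apply]
  have hb := (real_bounds_Xt X u).2
  rw [huu, mul_one] at hb
  refine le_trans ?_ hb
  calc (1:ℝ) = X i₀ i₀ * X i₀ i₀ := by rw [h3 i₀]; norm_num
  _ ≤ ∑ i, (Xᵀ *ᵥ u) i * (Xᵀ *ᵥ u) i := by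
      refine Finset.single_le_sum (f := fun i => (Xᵀ *ᵥ u) i * (Xᵀ *ᵥ u) i)
        (fun i _ => mul_self_nonneg _) (Finset.mem_univ i₀) |>.trans_eq' ?_
      rw [hXu i₀]
  _ = (Xᵀ *ᵥ u) ⬝ᵥ (Xᵀ *ᵥ u) := rfl

lemma gramMaxEig_le_sq (hn : 0 < n) (X : Matrix (Fin n) (Fin n) ℝ) (hb : ∀ i j, |X i j| ≤ 1) :
    gramMaxEig X ≤ (n : ℝ) * n := by
  have : Nonempty (Fin n) := ⟨⟨0, hn⟩⟩
  refine ciSup_le fun i => ?_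
  obtain ⟨u, hu1, hu2⟩ := eigen_attained _ (Matrix.isHermitian_mul_conjTranspose_self X) i
  have hq : (Matrix.isHermitian_mul_conjTranspose_self X).eigenvalues i
      = (Xᵀ *ᵥ u) ⬝ᵥ (Xᵀ *ᵥ u) := by
    have key : u ⬝ᵥ ((X * Xᴴ) *ᵥ u) = (Xᵀ *ᵥ u) ⬝ᵥ (Xᵀ *ᵥ u) := by
      rw [← Matrix.mulVec_mulVec, dotProduct_mulVec,
        Matrix.conjTranspose_eq_transpose_of_trivial, Matrix.mulVec_transpose]
    rw [← key, hu2, dotProduct_smul, smul_eq_mul, hu1, mul_one]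
  rw [hq]
  have hcs : (∑ j, |u j|) ^ 2 ≤ (n : ℝ) * ∑ j, |u j| ^ 2 := by
    simpa using sq_sum_le_card_mul_sum_sq (s := Finset.univ) (f := fun j => |u j|)
  have husq : (∑ j, |u j| ^ 2) = 1 := by
    rw [← hu1]; rw [dotProduct]
    exact Finset.sum_congr rfl fun j _ => by rw [sq, abs_mul_abs_self]
  have hterm : ∀ i', (Xᵀ *ᵥ u) i' * (Xᵀ *ᵥ u) i' ≤ (n : ℝ) := by
    intro i'
    have habs : |(Xᵀ *ᵥ u) i'| ≤ ∑ j, |u j| := by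
      rw [Matrix.mulVec, dotProduct]
      refine le_trans (Finset.abs_sum_le_sum_abs _ _) (Finset.sum_le_sum fun j _ => ?_)
      rw [abs_mul, Matrix.transpose_apply]
      calc |X j i'| * |u j| ≤ 1 * |u j| :=
            mul_le_mul_of_nonneg_right (hb j i') (abs_nonneg _)
      _ = |u j| := one_mul _
    calc (Xᵀ *ᵥ u) i' * (Xᵀ *ᵥ u) i' = |(Xᵀ *ᵥ u) i'| ^ 2 := by rw [sq, abs_mul_abs_self]
    _ ≤ (∑ j, |u j|) ^ 2 := by
        refine pow_le_pow_left₀ (abs_nonneg _) habs 2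
    _ ≤ (n : ℝ) * ∑ j, |u j| ^ 2 := hcs
    _ = (n : ℝ) := by rw [husq, mul_one]
  calc (Xᵀ *ᵥ u) ⬝ᵥ (Xᵀ *ᵥ u) = ∑ i', (Xᵀ *ᵥ u) i' * (Xᵀ *ᵥ u) i' := rfl
  _ ≤ ∑ _i' : Fin n, (n : ℝ) := Finset.sum_le_sum fun i' _ => hterm i'
  _ = (n : ℝ) * n := by rw [Finset.sum_const, Finset.card_univ, Fintype.card_fin,
        nsmul_eq_mul]

lemma gramMinEig_nonneg (X : Matrix (Fin n) (Fin n) ℝ) (hn : 0 < n) : 0 ≤ gramMinEig X := by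
  have : Nonempty (Fin n) := ⟨⟨0, hn⟩⟩
  exact le_ciInf fun i => Matrix.eigenvalues_self_mul_conjTranspose_nonneg X i

lemma memKn_one : MemKn (1 : Matrix (Fin n) (Fin n) ℝ) := by
  refine ⟨fun i j h => ?_, fun i j => ?_, fun i => ?_⟩
  · exact Matrix.one_apply_ne (ne_of_lt h)
  · by_cases hij : i = j
    · right; rw [hij]; exact Matrix.one_apply_eq j
    · left; exact Matrix.one_apply_ne hij
  · exact Matrix.one_apply_eq i

lemma cKn_le' (hn : 0 < n) {X : Matrix (Fin n) (Fin n) ℝ} (hX : MemKn X) :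
    cKn n ≤ gramMinEig X := by
  have hbdd : BddBelow (Set.range fun Y : {X : Matrix (Fin n) (Fin n) ℝ // MemKn X} =>
      gramMinEig Y.1) := by
    refine ⟨0, fun y hy => ?_⟩
    obtain ⟨Y, rfl⟩ := hy
    exact gramMinEig_nonneg Y.1 hn
  exact ciInf_le hbdd ⟨X, hX⟩

lemma cKn_nonneg' (hn : 0 < n) : 0 ≤ cKn n := by
  have : Nonempty {X : Matrix (Fin n) (Fin n) ℝ // MemKn X} := ⟨⟨1, memKn_one⟩⟩
  exact le_ciInf fun Y => gramMinEig_nonneg Y.1 hn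

lemma le_CKn (hn : 0 < n) {X : Matrix (Fin n) (Fin n) ℝ} (hX : MemKn X) :
    gramMaxEig X ≤ CKn n := by
  have hbdd : BddAbove (Set.range fun Y : {X : Matrix (Fin n) (Fin n) ℝ // MemKn X} =>
      gramMaxEig Y.1) := by
    refine ⟨(n : ℝ) * n, fun y hy => ?_⟩
    obtain ⟨Y, rfl⟩ := hy
    refine gramMaxEig_le_sq hn Y.1 fun i j => ?_
    rcases Y.2.2.1 i j with h | h <;> rw [h] <;> norm_num
  exact le_ciSup hbdd ⟨X, hX⟩

lemma CKn_pos' (hn : 0 < n) : 0 < CKn n := by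
  have h1 : (1:ℝ) ≤ gramMaxEig (1 : Matrix (Fin n) (Fin n) ℝ) :=
    gramMaxEig_ge_one hn _ memKn_one.2.2
  linarith [le_CKn hn (memKn_one (n := n))]

section Moebius
variable {P : Type*} [Lattice P] [OrderBot P] [LocallyFiniteOrder P]
    [DecidableRel ((· ≤ ·) : P → P → Prop)] [DecidableEq P]
    (mu : P → P → ℂ)
    (hmu_self : ∀ p, mu p p = 1)
    (hmu_lt : ∀ p q : P, p < q → mu p q = -∑ r ∈ Finset.Ico p q, mu p r)

include hmu_self hmu_lt in
lemma mu_sum_Icc (w y : P) (hwy : w ≤ y) :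
    ∑ z ∈ Finset.Icc w y, mu w z = if w = y then 1 else 0 := by
  rcases eq_or_lt_of_le hwy with rfl | hlt
  · simp [hmu_self]
  · rw [if_neg (ne_of_lt hlt)]
    rw [← Finset.Ico_insert_right hwy, Finset.sum_insert Finset.right_notMem_Ico]
    rw [hmu_lt w y hlt]
    ring

include hmu_self hmu_lt in
lemma moebius_inversion (h : P → ℂ) (y : P) :
    ∑ z ∈ Finset.Icc ⊥ y, ∑ w ∈ Finset.Icc ⊥ z, h w * mu w z = h y := by
  have hcond : ∀ z w : P, (z ∈ Finset.Icc ⊥ y ∧ w ∈ Finset.Icc ⊥ z) ↔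
      (z ∈ Finset.Icc w y ∧ w ∈ Finset.Icc ⊥ y) := by
    intro z w
    simp only [Finset.mem_Icc]
    constructor
    · rintro ⟨⟨-, hzy⟩, ⟨-, hwz⟩⟩
      exact ⟨⟨hwz, hzy⟩, ⟨bot_le, le_trans hwz hzy⟩⟩
    · rintro ⟨⟨hwz, hzy⟩, ⟨-, -⟩⟩
      exact ⟨⟨bot_le, hzy⟩, ⟨bot_le, hwz⟩⟩
  have hc := Finset.sum_comm' (s := Finset.Icc ⊥ y) (t := fun z => Finset.Icc ⊥ z)
    (t' := Finset.Icc ⊥ y) (s' := fun w => Finset.Icc w y)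
    (f := fun z w => h w * mu w z) hcond
  rw [hc]
  · have step : ∀ w ∈ Finset.Icc ⊥ y, ∑ z ∈ Finset.Icc w y, h w * mu w z
        = if w = y then h y else 0 := by
      intro w hw
      rw [← Finset.mul_sum, mu_sum_Icc mu hmu_self hmu_lt w y (Finset.mem_Icc.mp hw).2]
      split_ifs with h1
      · subst h1; rw [mul_one]
      · rw [mul_zero]
    rw [Finset.sum_congr rfl step, Finset.sum_ite_eq' (Finset.Icc ⊥ y) y (fun _ => h y)]
    rw [if_pos (Finset.mem_Icc.mpr ⟨bot_le, le_refl y⟩)]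

end Moebius

section Partition
variable {P : Type*} [Lattice P] [OrderBot P] [LocallyFiniteOrder P]
    [DecidableRel ((· ≤ ·) : P → P → Prop)] [DecidableEq P]
    {n : ℕ} (x : Fin n → P)
    (hord : ∀ i j, x i ≤ x j → i ≤ j)
    (hmeet : ∀ i j, ∃ k, x k = x i ⊓ x j)

include hord hmeet in
lemma partition_sum (G : P → ℂ) (m : Fin n) :
    ∑ k ∈ Finset.univ.filter (fun k => x k ≤ x m),
      ∑ z ∈ (Finset.Icc ⊥ (x k)).filter (fun z => ∀ j, j < k → ¬ z ≤ x j), G z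
    = ∑ z ∈ Finset.Icc ⊥ (x m), G z := by
  classical
  set T : Fin n → Finset P :=
    fun k => (Finset.Icc ⊥ (x k)).filter (fun z => ∀ j, j < k → ¬ z ≤ x j) with hT
  have hdisj : ((Finset.univ.filter (fun k => x k ≤ x m) : Finset (Fin n)) : Set (Fin n)).PairwiseDisjoint T := by
    intro a ha b hb hab
    refine Finset.disjoint_left.mpr fun z hza hzb => ?_
    rcases lt_or_gt_of_ne hab with h | h
    · have h1 : z ≤ x a := (Finset.mem_Icc.mp (Finset.mem_filter.mp hza).1).2
      exact (Finset.mem_filter.mp hzb).2 a h h1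
    · have h1 : z ≤ x b := (Finset.mem_Icc.mp (Finset.mem_filter.mp hzb).1).2
      exact (Finset.mem_filter.mp hza).2 b h h1
  have hunion : (Finset.univ.filter (fun k => x k ≤ x m)).biUnion T = Finset.Icc ⊥ (x m) := by
    ext z
    simp only [Finset.mem_biUnion, Finset.mem_filter, Finset.mem_univ, true_and, hT,
      Finset.mem_Icc]
    constructor
    · rintro ⟨k, hk, ⟨-, hzk⟩, -⟩
      exact ⟨bot_le, le_trans hzk hk⟩
    · rintro ⟨-, hzm⟩
      have hne : (Finset.univ.filter (fun k => z ≤ x k) : Finset (Fin n)).Nonempty :=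
        ⟨m, by simp [hzm]⟩
      obtain ⟨k₀, hk₀mem, hk₀min⟩ := Finset.exists_min_image _ id hne
      have hzk₀ : z ≤ x k₀ := (Finset.mem_filter.mp hk₀mem).2
      have hmin : ∀ j, j < k₀ → ¬ z ≤ x j := by
        intro j hj hzj
        have : k₀ ≤ j := hk₀min j (by simp [hzj])
        exact absurd hj (not_lt.mpr this)
      have hk₀m : x k₀ ≤ x m := by
        obtain ⟨k', hk'⟩ := hmeet k₀ m
        have h1 : x k' ≤ x k₀ := hk' ▸ inf_le_left
        have h2 : z ≤ x k' := hk' ▸ le_inf hzk₀ hzm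
        have h3 : k' ≤ k₀ := hord _ _ h1
        have h4 : k₀ ≤ k' := hk₀min k' (by simp [h2])
        have : k' = k₀ := le_antisymm h3 h4
        rw [← this, hk']
        exact inf_le_right
      exact ⟨k₀, hk₀m, ⟨bot_le, hzk₀⟩, hmin⟩
  rw [← hunion, Finset.sum_biUnion hdisj]

end Partition

section Fact
variable {P : Type*} [Lattice P] [OrderBot P] [LocallyFiniteOrder P]
    [DecidableRel ((· ≤ ·) : P → P → Prop)] [DecidableEq P]
    (mu : P → P → ℂ)
    (hmu_self : ∀ p, mu p p = 1)
    (hmu_lt : ∀ p q : P, p < q → mu p q = -∑ r ∈ Finset.Ico p q, mu p r)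
    {n : ℕ} (x : Fin n → P)
    (hord : ∀ i j, x i ≤ x j → i ≤ j)
    (hmeet : ∀ i j, ∃ k, x k = x i ⊓ x j)

include hmu_self hmu_lt hord hmeet in
lemma entry_factor (h : P → ℂ) (c : Fin n → ℂ)
    (hc : ∀ i, c i = ∑ z ∈ (Finset.Icc ⊥ (x i)).filter
        (fun z => ∀ j, j < i → ¬ z ≤ x j),
      ∑ w ∈ Finset.Icc ⊥ z, h w * mu w z) (i j : Fin n) :
    h (x i ⊓ x j) = ∑ k, (if x k ≤ x i then (1:ℂ) else 0) * c k
      * (if x k ≤ x j then (1:ℂ) else 0) := by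
  obtain ⟨m, hm⟩ := hmeet i j
  have hsum : ∀ k : Fin n, (if x k ≤ x i then (1:ℂ) else 0) * c k
      * (if x k ≤ x j then (1:ℂ) else 0) = if x k ≤ x m then c k else 0 := by
    intro k
    have hiff : x k ≤ x m ↔ x k ≤ x i ∧ x k ≤ x j := by rw [hm, le_inf_iff]
    by_cases hkm : x k ≤ x m
    · obtain ⟨h1, h2⟩ := hiff.mp hkm
      simp [h1, h2, hkm]
    · rw [if_neg hkm]
      have hni : ¬(x k ≤ x i ∧ x k ≤ x j) := fun hh => hkm (hiff.mpr hh)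
      by_cases h1 : x k ≤ x i <;> by_cases h2 : x k ≤ x j <;>
        simp [h1, h2] <;> exact absurd ⟨h1, h2⟩ hni
  rw [Finset.sum_congr rfl fun k _ => hsum k, Finset.sum_ite, Finset.sum_const_zero, add_zero]
  rw [Finset.sum_congr rfl fun k hk => hc k]
  rw [partition_sum x hord hmeet _ m]
  rw [moebius_inversion mu hmu_self hmu_lt h (x m), hm]

end Fact

lemma dot_self_nonneg (u : Fin n → ℝ) : 0 ≤ u ⬝ᵥ u :=
  Finset.sum_nonneg fun j _ => mul_self_nonneg _


/-- **global lower bound.** If in addition each `d i ≠ 0`, every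
`[S]_f`-eigenvalue `λ` of `(S)_f` satisfies
`|λ| ≥ m_f M_g⁻¹ C_n⁻¹ c_n / (max_i |f (x i)|)²`. -/
theorem global_lower_bound_meet_wrt_join
    {P : Type*} [Lattice P] [OrderBot P] [LocallyFiniteOrder P]
    [DecidableRel ((· ≤ ·) : P → P → Prop)]
    (mu : P → P → ℂ)
    (hmu_self : ∀ p, mu p p = 1)
    (hmu_lt : ∀ p q : P, p < q → mu p q = -∑ r ∈ Finset.Ico p q, mu p r)
    (hmu_nle : ∀ p q : P, ¬ p ≤ q → mu p q = 0)
    (f : P → ℂ) (hf : ∀ p, f p ≠ 0)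
    (hsemi : ∀ p q : P, f (p ⊓ q) * f (p ⊔ q) = f p * f q)
    (g : P → ℂ) (hg : ∀ p, g p = (f p)⁻¹)
    {n : ℕ} (hn : 0 < n)
    (x : Fin n → P) (hinj : Function.Injective x)
    (hord : ∀ i j, x i ≤ x j → i ≤ j)
    (hmeet : ∀ i j, ∃ k, x k = x i ⊓ x j)
    (l : Fin n → ℂ)
    (hl : ∀ i, l i = ∑ z ∈ (Finset.Icc ⊥ (x i)).filter
        (fun z => ∀ j, j < i → ¬ z ≤ x j),
      ∑ w ∈ Finset.Icc ⊥ z, g w * mu w z)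
    (hl0 : ∀ i, l i ≠ 0)
    (d : Fin n → ℂ)
    (hd : ∀ i, d i = ∑ z ∈ (Finset.Icc ⊥ (x i)).filter
        (fun z => ∀ j, j < i → ¬ z ≤ x j),
      ∑ w ∈ Finset.Icc ⊥ z, f w * mu w z)
    (hd0 : ∀ i, d i ≠ 0)
    (lam : ℂ) (v : Fin n → ℂ) (hv : v ≠ 0)
    (heig : (Matrix.of fun i j => f (x i ⊓ x j)).mulVec v =
      lam • (Matrix.of fun i j => f (x i ⊔ x j)).mulVec v) :
    ‖lam‖ ≥
      ((⨅ i, ‖d i‖) * (⨆ i, ‖l i‖)⁻¹ * (CKn n)⁻¹ * cKn n) /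
        (⨆ i, ‖f (x i)‖) ^ 2 := by
  classical
  set i₀ : Fin n := ⟨0, hn⟩ with hi₀
  have hne : Nonempty (Fin n) := ⟨i₀⟩
  -- the incidence matrix
  set X : Matrix (Fin n) (Fin n) ℝ :=
    Matrix.of (fun i k => if x k ≤ x i then (1:ℝ) else 0) with hX
  have hXKn : MemKn X := by
    refine ⟨fun i j hij => ?_, fun i j => ?_, fun i => ?_⟩
    · have : ¬ x j ≤ x i := fun h => absurd (hord j i h) (not_le.mpr hij)
      simp [hX, this]
    · by_cases h : x j ≤ x i <;> simp [hX, h]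
    · simp [hX]
  have hXinj : Function.Injective X.mulVec := unitriang_inj X hXKn.1 hXKn.2.2
  set Mc : Matrix (Fin n) (Fin n) ℂ := X.map Complex.ofReal with hMcdef
  have hMc : ∀ i k, Mc i k = if x k ≤ x i then (1:ℂ) else 0 := by
    intro i k
    simp [hMcdef, hX, apply_ite Complex.ofReal]
  -- factorizations
  have hfact : ∀ (h : P → ℂ) (c : Fin n → ℂ),
      (∀ i, c i = ∑ z ∈ (Finset.Icc ⊥ (x i)).filter
        (fun z => ∀ j, j < i → ¬ z ≤ x j),
      ∑ w ∈ Finset.Icc ⊥ z, h w * mu w z) →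
      ∀ i j, (Mc * Matrix.diagonal c * Mcᵀ) i j = h (x i ⊓ x j) := by
    intro h c hc i j
    rw [Matrix.mul_apply]
    simp only [Matrix.mul_diagonal, Matrix.transpose_apply]
    rw [entry_factor mu hmu_self hmu_lt x hord hmeet h c hc i j]
    exact Finset.sum_congr rfl fun k _ => by rw [hMc i k, hMc j k]
  have hA : (Matrix.of fun i j => f (x i ⊓ x j)) = Mc * Matrix.diagonal d * Mcᵀ := by
    ext i j
    rw [Matrix.of_apply, hfact f d hd i j]
  have hjoin : ∀ i j : Fin n, f (x i ⊔ x j) = f (x i) * g (x i ⊓ x j) * f (x j) := by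
    intro i j
    apply mul_left_cancel₀ (hf (x i ⊓ x j))
    rw [hsemi (x i) (x j), hg]
    rw [mul_comm (f (x i)) (f (x i ⊓ x j))⁻¹, ← mul_assoc, ← mul_assoc,
      mul_inv_cancel₀ (hf (x i ⊓ x j)), one_mul]
  have hB : (Matrix.of fun i j => f (x i ⊔ x j)) =
      Matrix.diagonal (fun i => f (x i)) * (Mc * Matrix.diagonal l * Mcᵀ)
        * Matrix.diagonal (fun i => f (x i)) := by
    ext i j
    rw [Matrix.of_apply, Matrix.mul_diagonal, Matrix.diagonal_mul, hfact g l hl i j,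
      hjoin i j]
  -- scalar quantities
  set md : ℝ := ⨅ i, ‖d i‖ with hmd
  set Ml : ℝ := ⨆ i, ‖l i‖ with hMldef
  set mf : ℝ := ⨆ i, ‖f (x i)‖ with hmfdef
  have hmd0 : 0 ≤ md := le_ciInf fun i => norm_nonneg _
  have hmdle : ∀ i, md ≤ ‖d i‖ :=
    fun i => ciInf_le (f := fun i => ‖d i‖) ((Set.finite_range _).bddBelow) i
  have hMlle : ∀ i, ‖l i‖ ≤ Ml :=
    fun i => le_ciSup (f := fun i => ‖l i‖) ((Set.finite_range _).bddAbove) i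
  have hMlpos : 0 < Ml :=
    lt_of_lt_of_le (norm_pos_iff.mpr (hl0 i₀)) (hMlle i₀)
  have hmfle : ∀ i, ‖f (x i)‖ ≤ mf :=
    fun i => le_ciSup (f := fun i => ‖f (x i)‖) ((Set.finite_range _).bddAbove) i
  have hmfpos : 0 < mf :=
    lt_of_lt_of_le (norm_pos_iff.mpr (hf (x i₀))) (hmfle i₀)
  have hc0 : 0 ≤ cKn n := cKn_nonneg' hn
  have hc0le : cKn n ≤ gramMinEig X := cKn_le' hn hXKn
  have hC0ge : gramMaxEig X ≤ CKn n := le_CKn hn hXKn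
  have hC0pos : 0 < CKn n := CKn_pos' hn
  -- complex quadratic bounds for Mc and Mcᵀ
  have hrealX : ∀ u : Fin n → ℝ, cKn n * (u ⬝ᵥ u) ≤ (X *ᵥ u) ⬝ᵥ (X *ᵥ u) ∧
      (X *ᵥ u) ⬝ᵥ (X *ᵥ u) ≤ CKn n * (u ⬝ᵥ u) := by
    intro u
    have hb := real_bounds_X hn X hXinj u
    exact ⟨le_trans (mul_le_mul_of_nonneg_right hc0le (dot_self_nonneg u)) hb.1,
      le_trans hb.2 (mul_le_mul_of_nonneg_right hC0ge (dot_self_nonneg u))⟩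
  have hrealXt : ∀ u : Fin n → ℝ, cKn n * (u ⬝ᵥ u) ≤ (Xᵀ *ᵥ u) ⬝ᵥ (Xᵀ *ᵥ u) ∧
      (Xᵀ *ᵥ u) ⬝ᵥ (Xᵀ *ᵥ u) ≤ CKn n * (u ⬝ᵥ u) := by
    intro u
    have hb := real_bounds_Xt X u
    exact ⟨le_trans (mul_le_mul_of_nonneg_right hc0le (dot_self_nonneg u)) hb.1,
      le_trans hb.2 (mul_le_mul_of_nonneg_right hC0ge (dot_self_nonneg u))⟩
  have hMcb : ∀ w : Fin n → ℂ, cKn n * qc w ≤ qc (Mc *ᵥ w) ∧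
      qc (Mc *ᵥ w) ≤ CKn n * qc w :=
    fun w => qc_bounds_of_real X (cKn n) (CKn n) hrealX w
  have hMcTb : ∀ w : Fin n → ℂ, cKn n * qc w ≤ qc (Mcᵀ *ᵥ w) ∧
      qc (Mcᵀ *ᵥ w) ≤ CKn n * qc w := by
    intro w
    have htr : Mcᵀ = Xᵀ.map Complex.ofReal := by
      ext i k
      simp [hMcdef]
    rw [htr]
    exact qc_bounds_of_real Xᵀ (cKn n) (CKn n) hrealXt w
  -- the two long chains
  set A : Matrix (Fin n) (Fin n) ℂ := Matrix.of fun i j => f (x i ⊓ x j) with hAdef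
  set B : Matrix (Fin n) (Fin n) ℂ := Matrix.of fun i j => f (x i ⊔ x j) with hBdef
  have e1 : A *ᵥ v = Mc *ᵥ (Matrix.diagonal d *ᵥ (Mcᵀ *ᵥ v)) := by
    rw [hA, ← Matrix.mulVec_mulVec, ← Matrix.mulVec_mulVec]
  have e2 : B *ᵥ v = Matrix.diagonal (fun i => f (x i)) *ᵥ (Mc *ᵥ (Matrix.diagonal l *ᵥ
      (Mcᵀ *ᵥ (Matrix.diagonal (fun i => f (x i)) *ᵥ v)))) := by
    rw [hB, ← Matrix.mulVec_mulVec, ← Matrix.mulVec_mulVec, ← Matrix.mulVec_mulVec,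
      ← Matrix.mulVec_mulVec]
  have h1 : cKn n * ((md * md) * (cKn n * qc v)) ≤ qc (A *ᵥ v) := by
    rw [e1]
    refine le_trans ?_ (hMcb _).1
    refine mul_le_mul_of_nonneg_left ?_ hc0
    refine le_trans ?_ (qc_diagonal_ge d md hmd0 hmdle _)
    exact mul_le_mul_of_nonneg_left (hMcTb v).1 (mul_nonneg hmd0 hmd0)
  have h3 : qc (B *ᵥ v) ≤ (mf * mf) * (CKn n * ((Ml * Ml) * (CKn n * ((mf * mf) * qc v)))) := by
    rw [e2]
    refine le_trans (qc_diagonal_le (fun i => f (x i)) mf hmfle _) ?_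
    refine mul_le_mul_of_nonneg_left ?_ (mul_nonneg hmfpos.le hmfpos.le)
    refine le_trans (hMcb _).2 ?_
    refine mul_le_mul_of_nonneg_left ?_ hC0pos.le
    refine le_trans (qc_diagonal_le l Ml hMlle _) ?_
    refine mul_le_mul_of_nonneg_left ?_ (mul_nonneg (hMlpos.le) (hMlpos.le))
    refine le_trans (hMcTb _).2 ?_
    refine mul_le_mul_of_nonneg_left ?_ hC0pos.le
    exact qc_diagonal_le (fun i => f (x i)) mf hmfle _
  have h2 : qc (A *ᵥ v) = Complex.normSq lam * qc (B *ᵥ v) := by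
    rw [show A *ᵥ v = lam • (B *ᵥ v) from heig, qc_smul]
  -- combine
  have hns : Complex.normSq lam = ‖lam‖ * ‖lam‖ := by
    rw [Complex.normSq_eq_norm_sq, sq]
  set a : ℝ := cKn n * md with ha
  set b : ℝ := ‖lam‖ * (mf * mf * (CKn n * Ml)) with hb
  have hq1 : (a * a) * qc v ≤ (b * b) * qc v := by
    calc (a * a) * qc v = cKn n * ((md * md) * (cKn n * qc v)) := by rw [ha]; ring
    _ ≤ qc (A *ᵥ v) := h1
    _ = Complex.normSq lam * qc (B *ᵥ v) := h2
    _ ≤ Complex.normSq lam *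
        ((mf * mf) * (CKn n * ((Ml * Ml) * (CKn n * ((mf * mf) * qc v))))) :=
        mul_le_mul_of_nonneg_left h3 (Complex.normSq_nonneg _)
    _ = (b * b) * qc v := by rw [hb, hns]; ring
  have hq2 : a * a ≤ b * b := le_of_mul_le_mul_right hq1 (qc_pos hv)
  have hab : a ≤ b := by
    have hbnn : 0 ≤ b := by
      rw [hb]
      positivity
    nlinarith [hq2, mul_nonneg hc0 hmd0]
  -- final algebra
  rw [ge_iff_le, div_le_iff₀ (by positivity : (0:ℝ) < mf ^ 2)]
  have hCMl : (0:ℝ) < CKn n * Ml := mul_pos hC0pos hMlpos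
  have hrw : md * Ml⁻¹ * (CKn n)⁻¹ * cKn n = (cKn n * md) * (CKn n * Ml)⁻¹ := by
    rw [mul_inv]
    ring
  rw [hrw, ← div_eq_mul_inv, div_le_iff₀ hCMl]
  calc cKn n * md ≤ b := hab
  _ = ‖lam‖ * mf ^ 2 * (CKn n * Ml) := by rw [hb]; ring
end

section
/- Let (P, ≼, ∧, ∨) be a locally finite lattice with least element 0̂, let f be a semimultiplicative complex-valued function on P with f(x) ≠ 0 for all x ∈ P, set g(x) = 1/f(x), and let S = {x_1, …, x_n} be a finite lower closed subset of P with distinct elements, indexed so that x_i ≼ x_j only if i ≤ j. Assume l_i = ∑_{z ≼ x_i, z ⋠ x_j for all j < i} (g_d * μ)(0̂, z) ≠ 0 for all i. Then for all i, j ∈ {1, …, n}, (L⁻¹ A)_{ij} = l_i⁻¹ ∑_{α=1}^n ∑_{β=1}^n μ(x_α, x_i) μ(x_β, x_j) / f(x_α ∨ x_β), where L = diag(l_1, …, l_n), A = (RE)⁻¹ (S)_f (Eᵀ R)⁻¹, R = diag(f(x_1), …, f(x_n)), and E is the n×n matrix with E_{ij} = 1 if x_j ≼ x_i and 0 otherwise.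 -/
open Matrix

/-- For lower closed `S`, the entries of `L⁻¹ * A` are
`(L⁻¹ A)_{ij} = l i⁻¹ ∑_{α,β} μ(x α, x i) μ(x β, x j) / f (x α ∨ x β)`. -/
theorem entries_of_Linv_A
    {P : Type*} [Lattice P] [OrderBot P] [LocallyFiniteOrder P]
    [DecidableRel ((· ≤ ·) : P → P → Prop)]
    (mu : P → P → ℂ)
    (hmu_self : ∀ p, mu p p = 1)
    (hmu_lt : ∀ p q : P, p < q → mu p q = -∑ r ∈ Finset.Ico p q, mu p r)
    (hmu_nle : ∀ p q : P, ¬ p ≤ q → mu p q = 0)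
    (f : P → ℂ) (hf : ∀ p, f p ≠ 0)
    (hsemi : ∀ p q : P, f (p ⊓ q) * f (p ⊔ q) = f p * f q)
    (g : P → ℂ) (hg : ∀ p, g p = (f p)⁻¹)
    {n : ℕ} (x : Fin n → P) (hinj : Function.Injective x)
    (hord : ∀ i j, x i ≤ x j → i ≤ j)
    (hlower : ∀ i (z : P), z ≤ x i → ∃ k, x k = z)
    (l : Fin n → ℂ)
    (hl : ∀ i, l i = ∑ z ∈ (Finset.Icc ⊥ (x i)).filter
        (fun z => ∀ j, j < i → ¬ z ≤ x j),
      ∑ w ∈ Finset.Icc ⊥ z, g w * mu w z)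
    (hl0 : ∀ i, l i ≠ 0)
    (E : Matrix (Fin n) (Fin n) ℂ)
    (hE : ∀ i j, E i j = if x j ≤ x i then 1 else 0)
    (L R A : Matrix (Fin n) (Fin n) ℂ)
    (hL : L = Matrix.diagonal l)
    (hR : R = Matrix.diagonal (fun i => f (x i)))
    (hA : A = (R * E)⁻¹ * (Matrix.of fun i j => f (x i ⊓ x j)) * (Eᵀ * R)⁻¹) :
    ∀ i j, (L⁻¹ * A) i j =
      (l i)⁻¹ * ∑ α : Fin n, ∑ β : Fin n,
        mu (x α) (x i) * mu (x β) (x j) / f (x α ⊔ x β) := by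
  classical
  -- Möbius interval sum identity
  have msum : ∀ p q : P, p ≤ q → ∑ z ∈ Finset.Icc p q, mu p z = if p = q then 1 else 0 := by
    intro p q hpq
    rcases eq_or_lt_of_le hpq with rfl | hlt
    · simp [hmu_self]
    · rw [if_neg hlt.ne, Finset.Icc_eq_cons_Ico hpq, Finset.sum_cons, hmu_lt p q hlt]
      ring
  -- image description of intervals below x i
  have himg : ∀ i : Fin n, Finset.Icc ⊥ (x i) =
      (Finset.univ.filter (fun α => x α ≤ x i)).image x := by
    intro i
    ext z
    simp only [Finset.mem_Icc, Finset.mem_image, Finset.mem_filter, Finset.mem_univ, true_and,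
      bot_le, and_true]
    constructor
    · intro hz
      obtain ⟨k, hk⟩ := hlower i z hz
      exact ⟨k, hk ▸ hz, hk⟩
    · rintro ⟨k, hk, rfl⟩
      exact hk
  set MU : Matrix (Fin n) (Fin n) ℂ := Matrix.of fun α i => mu (x α) (x i) with hMU
  set F : Matrix (Fin n) (Fin n) ℂ := Matrix.of fun i j => (f (x i ⊔ x j))⁻¹ with hF
  -- key: E * MUᵀ = 1
  have key : E * MUᵀ = 1 := by
    ext i γ
    rw [Matrix.mul_apply]
    have : ∑ α : Fin n, E i α * MUᵀ α γ
        = ∑ α ∈ Finset.univ.filter (fun α => x α ≤ x i), mu (x γ) (x α) := by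
      rw [Finset.sum_filter]
      refine Finset.sum_congr rfl fun α _ => ?_
      rw [hE]
      split_ifs <;> simp [hMU, Matrix.transpose_apply]
    rw [this]
    have himg' : ∑ α ∈ Finset.univ.filter (fun α => x α ≤ x i), mu (x γ) (x α)
        = ∑ z ∈ Finset.Icc ⊥ (x i), mu (x γ) z := by
      rw [himg i, Finset.sum_image (fun a _ b _ hab => hinj hab)]
    rw [himg']
    by_cases hγi : x γ ≤ x i
    · have hsub : Finset.Icc (x γ) (x i) ⊆ Finset.Icc ⊥ (x i) := by
        intro z hz
        simp only [Finset.mem_Icc] at hz ⊢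
        exact ⟨bot_le, hz.2⟩
      rw [← Finset.sum_subset hsub (fun z hz hz' => by
        refine hmu_nle _ _ fun hle => hz' ?_
        simp only [Finset.mem_Icc] at hz ⊢
        exact ⟨hle, hz.2⟩)]
      rw [msum _ _ hγi]
      have : (x γ = x i) ↔ (i = γ) := ⟨fun h => (hinj h).symm, fun h => h ▸ rfl⟩
      simp only [Matrix.one_apply]
      split_ifs with h1 h2 h2 <;> first | rfl | (exact absurd (this.mp h1) h2) |
        (exact absurd (this.mpr h2) h1)
    · have : ∀ z ∈ Finset.Icc ⊥ (x i), mu (x γ) z = 0 := by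
        intro z hz
        refine hmu_nle _ _ fun hle => hγi ?_
        simp only [Finset.mem_Icc] at hz
        exact hle.trans hz.2
      rw [Finset.sum_eq_zero this, Matrix.one_apply,
        if_neg (fun h : i = γ => hγi (h ▸ le_refl (x i)))]
  have key2 : MU * Eᵀ = 1 := by
    have := congrArg Matrix.transpose key
    rwa [Matrix.transpose_mul, Matrix.transpose_transpose, Matrix.transpose_one] at this
  -- B is the claimed matrix
  set B : Matrix (Fin n) (Fin n) ℂ := MUᵀ * F * MU with hB
  -- (R*E) * B * (Eᵀ*R) = Sf
  have hSf : (R * E) * B * (Eᵀ * R) = (Matrix.of fun i j => f (x i ⊓ x j)) := by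
    have : (R * E) * B * (Eᵀ * R) = R * ((E * MUᵀ) * F * (MU * Eᵀ)) * R := by
      simp only [hB, Matrix.mul_assoc]
    rw [this, key, key2, Matrix.one_mul, Matrix.mul_one]
    ext i j
    rw [hR]
    simp only [Matrix.mul_diagonal, Matrix.diagonal_mul, Matrix.of_apply, hF]
    have h := hsemi (x i) (x j)
    rw [mul_right_comm, ← h, mul_assoc, mul_inv_cancel₀ (hf _), mul_one]
  -- invertibility
  have hdetE : IsUnit E.det := by
    have := congrArg Matrix.det key
    rw [Matrix.det_mul, Matrix.det_one] at this
    exact IsUnit.of_mul_eq_one _ this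
  have hdetR : IsUnit R.det := by
    rw [hR, Matrix.det_diagonal]
    exact isUnit_iff_ne_zero.mpr (Finset.prod_ne_zero_iff.mpr fun i _ => hf (x i))
  have hdetRE : IsUnit (R * E).det := by
    rw [Matrix.det_mul]; exact hdetR.mul hdetE
  have hdetER : IsUnit (Eᵀ * R).det := by
    rw [Matrix.det_mul, Matrix.det_transpose]; exact hdetE.mul hdetR
  -- A = B
  have hAB : A = B := by
    rw [hA, ← hSf, Matrix.mul_assoc (R * E),
      ← Matrix.mul_assoc ((R * E)⁻¹) (R * E), Matrix.nonsing_inv_mul _ hdetRE,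
      Matrix.one_mul, Matrix.mul_nonsing_inv_cancel_right _ _ hdetER]
  intro i j
  have hLinv : L⁻¹ = Matrix.diagonal fun i => (l i)⁻¹ := by
    refine Matrix.inv_eq_right_inv ?_
    rw [hL, Matrix.diagonal_mul_diagonal]
    rw [show (fun i => l i * (l i)⁻¹) = fun _ => (1 : ℂ) from
      funext fun i => mul_inv_cancel₀ (hl0 i), Matrix.diagonal_one]
  rw [hLinv, Matrix.diagonal_mul, hAB]
  congr 1
  rw [hB, Matrix.mul_apply]
  rw [Finset.sum_comm]
  refine Finset.sum_congr rfl fun α _ => ?_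
  rw [Matrix.mul_apply, Finset.sum_mul]
  refine Finset.sum_congr rfl fun β _ => ?_
  simp only [hMU, hF, Matrix.of_apply, Matrix.transpose_apply]
  rw [div_eq_mul_inv]
  ring
end

section
/- Let (P, ≼, ∧, ∨) be a locally finite lattice with least element 0̂, let f be a semimultiplicative complex-valued function on P with f(x) ≠ 0 for all x ∈ P, set g(x) = 1/f(x), and let S = {x_1, …, x_n} be a finite lower closed subset of P with distinct elements, indexed so that x_i ≼ x_j only if i ≤ j. Assume l_i = ∑_{z ≼ x_i, z ⋠ x_j for all j < i} (g_d * μ)(0̂, z) ≠ 0 for all i. Then every [S]_f-eigenvalue λ ∈ ℂ of (S)_f satisfies |λ| ≤ c_f⁻¹ · m_g⁻¹ · F_{n+1} (F_{n+3} − 2), where c_f = min_{1≤i,j≤n} |f(x_i ∨ x_j)|, m_g = min_{1≤i≤n} |l_i|, and (F_k) is the Fibonacci sequence with F_1 = F_2 = 1 and F_{k+2} = F_k + F_{k+1}. -/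
open Matrix

noncomputable def invE (e : ℕ → ℕ → ℝ) : ℕ → ℕ → ℝ
  | i, j => (if i = j then (1:ℝ) else 0) -
      ∑ k ∈ (Finset.range i).attach, e i k.1 * invE e k.1 j
termination_by i j => i
decreasing_by exact Finset.mem_range.mp k.2

lemma invE_eq (e : ℕ → ℕ → ℝ) (i j : ℕ) :
    invE e i j = (if i = j then (1:ℝ) else 0) -
      ∑ k ∈ Finset.range i, e i k * invE e k j := by
  rw [invE, Finset.sum_attach _ (fun k => e i k * invE e k j)]

lemma invE_zero_of_lt (e : ℕ → ℕ → ℝ) : ∀ i j : ℕ, i < j → invE e i j = 0 := by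
  intro i
  induction i using Nat.strong_induction_on with
  | _ i ih =>
    intro j hij
    rw [invE_eq]
    rw [if_neg (Nat.ne_of_lt hij)]
    rw [Finset.sum_eq_zero, sub_zero]
    intro k hk
    rw [ih k (Finset.mem_range.mp hk) j (lt_trans (Finset.mem_range.mp hk) hij), mul_zero]

lemma invE_diag (e : ℕ → ℕ → ℝ) (i : ℕ) : invE e i i = 1 := by
  rw [invE_eq, if_pos rfl]
  rw [Finset.sum_eq_zero, sub_zero]
  intro k hk
  rw [invE_zero_of_lt e k i (Finset.mem_range.mp hk), mul_zero]

lemma invE_bounds (e : ℕ → ℕ → ℝ) (he : ∀ i k, e i k = 0 ∨ e i k = 1)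
    (j d : ℕ) (hd : 0 < d) :
    -(∑ k ∈ Finset.Ico j (j+d), max (invE e k j) 0) ≤ invE e (j+d) j ∧
      invE e (j+d) j ≤ ∑ k ∈ Finset.Ico j (j+d), max (-(invE e k j)) 0 := by
  have hne : j + d ≠ j := by omega
  have hrec : invE e (j+d) j = -∑ k ∈ Finset.Ico j (j+d), e (j+d) k * invE e k j := by
    rw [invE_eq, if_neg hne, zero_sub]
    congr 1
    refine (Finset.sum_subset ?_ ?_).symm
    · intro k hk
      simp only [Finset.mem_Ico] at hk
      exact Finset.mem_range.mpr hk.2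
    · intro k hk hk2
      simp only [Finset.mem_range] at hk
      simp only [Finset.mem_Ico, not_and, not_lt] at hk2
      have : k < j := by
        by_contra h
        exact absurd (hk2 (by omega)) (by omega)
      rw [invE_zero_of_lt e k j this, mul_zero]
  constructor
  · rw [hrec, neg_le_neg_iff]
    refine Finset.sum_le_sum ?_
    intro k _
    rcases he (j+d) k with h | h
    · rw [h, zero_mul]; exact le_max_right _ _
    · rw [h, one_mul]; exact le_max_left _ _
  · rw [hrec, neg_le_iff_add_nonneg]
    have : ∀ k ∈ Finset.Ico j (j+d),
        -(max (-(invE e k j)) 0) ≤ e (j+d) k * invE e k j := by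
      intro k _
      rcases he (j+d) k with h | h
      · rw [h, zero_mul]; simp only [neg_nonpos]; exact le_max_right _ _
      · rw [h, one_mul]
        have := le_max_left (-(invE e k j)) 0
        linarith
    have h2 := Finset.sum_le_sum this
    rw [Finset.sum_neg_distrib] at h2
    linarith

lemma invE_pq (e : ℕ → ℕ → ℝ) (he : ∀ i k, e i k = 0 ∨ e i k = 1) (j : ℕ) :
    ∀ d : ℕ,
      (∑ k ∈ Finset.Ico j (j+d), max (invE e k j) 0) ≤ Nat.fib d ∧
      (∑ k ∈ Finset.Ico j (j+d), max (-(invE e k j)) 0) ≤ Nat.fib d ∧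
      (∑ k ∈ Finset.Ico j (j+d), max (invE e k j) 0) +
        (∑ k ∈ Finset.Ico j (j+d), max (-(invE e k j)) 0) ≤ Nat.fib (d+1) := by
  intro d
  induction d with
  | zero => simp
  | succ d ih =>
    obtain ⟨hp, hq, hpq⟩ := ih
    have hle : j ≤ j + d := Nat.le_add_right j d
    have hsp : (∑ k ∈ Finset.Ico j (j+(d+1)), max (invE e k j) 0)
        = (∑ k ∈ Finset.Ico j (j+d), max (invE e k j) 0) + max (invE e (j+d) j) 0 := by
      rw [show j + (d+1) = (j+d) + 1 by omega, Finset.sum_Ico_succ_top hle]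
    have hsq : (∑ k ∈ Finset.Ico j (j+(d+1)), max (-(invE e k j)) 0)
        = (∑ k ∈ Finset.Ico j (j+d), max (-(invE e k j)) 0) + max (-(invE e (j+d) j)) 0 := by
      rw [show j + (d+1) = (j+d) + 1 by omega, Finset.sum_Ico_succ_top hle]
    have habs : max (invE e (j+d) j) 0 + max (-(invE e (j+d) j)) 0 = |invE e (j+d) j| := by
      rcases le_total (invE e (j+d) j) 0 with h | h
      · rw [max_eq_right h, abs_of_nonpos h, max_eq_left (by linarith), zero_add]
      · rw [max_eq_left h, abs_of_nonneg h, max_eq_right (by linarith), add_zero]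
    rcases Nat.eq_zero_or_pos d with rfl | hd
    · simp only [Nat.add_zero] at *
      rw [hsp, hsq]
      simp only [Finset.Ico_self, Finset.sum_empty, zero_add]
      rw [invE_diag]
      norm_num
    · obtain ⟨hb1, hb2⟩ := invE_bounds e he j d hd
      have hp0 : (0:ℝ) ≤ ∑ k ∈ Finset.Ico j (j+d), max (invE e k j) 0 :=
        Finset.sum_nonneg fun k _ => le_max_right _ _
      have hq0 : (0:ℝ) ≤ ∑ k ∈ Finset.Ico j (j+d), max (-(invE e k j)) 0 :=
        Finset.sum_nonneg fun k _ => le_max_right _ _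
      have hmp : max (invE e (j+d) j) 0 ≤ ∑ k ∈ Finset.Ico j (j+d), max (-(invE e k j)) 0 :=
        max_le hb2 hq0
      have hmq : max (-(invE e (j+d) j)) 0 ≤ ∑ k ∈ Finset.Ico j (j+d), max (invE e k j) 0 :=
        max_le (by linarith) hp0
      have hfib : (Nat.fib (d+1+1) : ℝ) = Nat.fib d + Nat.fib (d+1) := by
        rw [Nat.fib_add_two]; push_cast; ring
      have hmono : (Nat.fib (d+1) : ℝ) ≤ Nat.fib (d+1+1) := by
        exact_mod_cast Nat.fib_le_fib_succ
      have habs2 : |invE e (j+d) j| ≤ (Nat.fib d : ℝ) := by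
        rw [abs_le]; constructor <;> linarith
      refine ⟨?_, ?_, ?_⟩
      · rw [hsp]; linarith
      · rw [hsq]; linarith
      · rw [hsp, hsq, hfib]; linarith

lemma invE_abs_le (e : ℕ → ℕ → ℝ) (he : ∀ i k, e i k = 0 ∨ e i k = 1)
    (i j : ℕ) (hij : j < i) : |invE e i j| ≤ Nat.fib (i - j) := by
  obtain ⟨d, rfl⟩ : ∃ d, i = j + d := ⟨i - j, by omega⟩
  have hd : 0 < d := by omega
  obtain ⟨hp, hq, -⟩ := invE_pq e he j d
  obtain ⟨hb1, hb2⟩ := invE_bounds e he j d hd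
  rw [show j + d - j = d by omega, abs_le]
  constructor <;> linarith

lemma fib_sum_one (m : ℕ) :
    ∑ d ∈ Finset.range m, (Nat.fib (d + 1) : ℝ) = (Nat.fib (m+2) : ℝ) - 1 := by
  induction m with
  | zero => simp [Nat.fib]
  | succ m ih =>
    rw [Finset.sum_range_succ, ih, show m+1+2 = (m+1)+2 by omega,
      Nat.fib_add_two (n := m+1)]
    push_cast
    ring_nf

lemma fib_sum_shift (n : ℕ) :
    (∑ i ∈ Finset.range n, (Nat.fib (i+2) : ℝ)) = (Nat.fib (n+3) : ℝ) - 2 := by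
  induction n with
  | zero => simp [Nat.fib]
  | succ n ih =>
    rw [Finset.sum_range_succ, ih, show n+1+3 = (n+2)+2 by omega,
      Nat.fib_add_two (n := n+2)]
    push_cast
    ring_nf

lemma invE_rowsum (e : ℕ → ℕ → ℝ) (he : ∀ i k, e i k = 0 ∨ e i k = 1)
    (i n : ℕ) (hin : i < n) :
    ∑ j ∈ Finset.range n, |invE e i j| ≤ (Nat.fib (i+2) : ℝ) := by
  have h1 : ∑ j ∈ Finset.range n, |invE e i j|
      = ∑ j ∈ Finset.range (i+1), |invE e i j| := by
    refine (Finset.sum_subset (Finset.range_subset_range.mpr (by omega)) ?_).symm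
    intro j hj hj2
    rw [invE_zero_of_lt e i j (by simp only [Finset.mem_range] at hj2 ⊢; omega), abs_zero]
  rw [h1, Finset.sum_range_succ, invE_diag, abs_one]
  have h2 : ∑ j ∈ Finset.range i, |invE e i j|
      ≤ ∑ j ∈ Finset.range i, (Nat.fib (i - j) : ℝ) := by
    refine Finset.sum_le_sum ?_
    intro j hj
    exact invE_abs_le e he i j (Finset.mem_range.mp hj)
  have h3 : ∑ j ∈ Finset.range i, (Nat.fib (i - j) : ℝ)
      = ∑ d ∈ Finset.range i, (Nat.fib (d + 1) : ℝ) := by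
    rw [← Finset.sum_range_reflect (fun d => (Nat.fib (d+1) : ℝ)) i]
    refine Finset.sum_congr rfl ?_
    intro j hj
    simp only [Finset.mem_range] at hj
    congr 2
    omega
  have h4 := fib_sum_one i
  linarith

set_option maxHeartbeats 2000000 in
/-- **local upper bound.** For lower closed `S`, every `[S]_f`-eigenvalue
`λ` of `(S)_f` satisfies `|λ| ≤ c_f⁻¹ m_g⁻¹ F (n+1) (F (n+3) − 2)`, where `F` is the
Fibonacci sequence with `F 1 = F 2 = 1`, `c_f = min_{i,j} |f (x i ∨ x j)|` and
`m_g = min_i |l i|`. -/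
theorem local_upper_bound_meet_wrt_join
    {P : Type*} [Lattice P] [OrderBot P] [LocallyFiniteOrder P]
    [DecidableRel ((· ≤ ·) : P → P → Prop)]
    (mu : P → P → ℂ)
    (hmu_self : ∀ p, mu p p = 1)
    (hmu_lt : ∀ p q : P, p < q → mu p q = -∑ r ∈ Finset.Ico p q, mu p r)
    (hmu_nle : ∀ p q : P, ¬ p ≤ q → mu p q = 0)
    (f : P → ℂ) (hf : ∀ p, f p ≠ 0)
    (hsemi : ∀ p q : P, f (p ⊓ q) * f (p ⊔ q) = f p * f q)
    (g : P → ℂ) (hg : ∀ p, g p = (f p)⁻¹)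
    {n : ℕ} (hn : 0 < n)
    (x : Fin n → P) (hinj : Function.Injective x)
    (hord : ∀ i j, x i ≤ x j → i ≤ j)
    (hlower : ∀ i (z : P), z ≤ x i → ∃ k, x k = z)
    (l : Fin n → ℂ)
    (hl : ∀ i, l i = ∑ z ∈ (Finset.Icc ⊥ (x i)).filter
        (fun z => ∀ j, j < i → ¬ z ≤ x j),
      ∑ w ∈ Finset.Icc ⊥ z, g w * mu w z)
    (hl0 : ∀ i, l i ≠ 0)
    (lam : ℂ) (v : Fin n → ℂ) (hv : v ≠ 0)
    (heig : (Matrix.of fun i j => f (x i ⊓ x j)).mulVec v =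
      lam • (Matrix.of fun i j => f (x i ⊔ x j)).mulVec v) :
    ‖lam‖ ≤
      (⨅ p : Fin n × Fin n, ‖f (x p.1 ⊔ x p.2)‖)⁻¹ *
        (⨅ i, ‖l i‖)⁻¹ *
        ((Nat.fib (n + 1) : ℝ) * ((Nat.fib (n + 3) : ℝ) - 2)) := by
  classical
  haveI : NeZero n := ⟨hn.ne'⟩
  -- Step A : the filter in `hl` is the singleton `{x i}`
  have hfilter : ∀ i : Fin n, (Finset.Icc ⊥ (x i)).filter
      (fun z => ∀ j, j < i → ¬ z ≤ x j) = {x i} := by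
    intro i
    ext z
    simp only [Finset.mem_filter, Finset.mem_Icc, Finset.mem_singleton, bot_le, true_and]
    constructor
    · rintro ⟨hz, hcond⟩
      obtain ⟨k, rfl⟩ := hlower i z hz
      have hki : k ≤ i := hord k i hz
      rcases eq_or_lt_of_le hki with rfl | hlt
      · rfl
      · exact absurd le_rfl (hcond k hlt)
    · rintro rfl
      refine ⟨le_rfl, ?_⟩
      intro j hj hle
      exact absurd (hord i j hle) (not_le.mpr hj)
  have hl' : ∀ i, l i = ∑ w ∈ Finset.Icc ⊥ (x i), g w * mu w (x i) := by
    intro i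
    rw [hl i, hfilter i, Finset.sum_singleton]
  -- Möbius inversion
  have hmob : ∀ y : P, ∑ z ∈ Finset.Icc ⊥ y, ∑ w ∈ Finset.Icc ⊥ z, g w * mu w z = g y := by
    intro y
    have hswap : ∑ z ∈ Finset.Icc ⊥ y, ∑ w ∈ Finset.Icc ⊥ z, g w * mu w z
        = ∑ w ∈ Finset.Icc ⊥ y, ∑ z ∈ Finset.Icc w y, g w * mu w z := by
      refine Finset.sum_comm' ?_
      intro z w
      simp only [Finset.mem_Icc, bot_le, true_and]
      constructor
      · rintro ⟨h1, h2⟩; exact ⟨⟨h2, h1⟩, h2.trans h1⟩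
      · rintro ⟨⟨h1, h2⟩, h3⟩; exact ⟨h2, h1⟩
    rw [hswap]
    have hinner : ∀ w ∈ Finset.Icc ⊥ y, ∑ z ∈ Finset.Icc w y, g w * mu w z
        = if w = y then g y else 0 := by
      intro w hw
      simp only [Finset.mem_Icc, bot_le, true_and] at hw
      rw [← Finset.mul_sum]
      rcases eq_or_lt_of_le hw with rfl | hlt
      · simp [Finset.Icc_self, hmu_self]
      · rw [if_neg hlt.ne]
        rw [← Finset.Ico_insert_right hw, Finset.sum_insert Finset.right_notMem_Ico]
        rw [hmu_lt w y hlt]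
        ring_nf
    rw [Finset.sum_congr rfl hinner]
    simp
  -- indicator matrix
  set E : Fin n → Fin n → ℂ := fun i k => if x k ≤ x i then 1 else 0 with hE
  -- factorization of the meet matrix of g
  have hfact : ∀ i i' : Fin n, g (x i ⊓ x i')
      = ∑ k : Fin n, E i k * (E i' k * l k) := by
    intro i i'
    have h1 : ∀ k : Fin n, E i k * (E i' k * l k)
        = if x k ≤ x i ⊓ x i' then l k else 0 := by
      intro k
      simp only [hE, le_inf_iff]
      split_ifs with h1 h2 h3 <;> clear hE hl hl' hmob hfilter <;> simp_all
    rw [Finset.sum_congr rfl (fun k _ => h1 k), ← Finset.sum_filter]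
    rw [Finset.sum_congr rfl (fun k (_ : k ∈ _) => hl' k)]
    have himg : (Finset.univ.filter (fun k => x k ≤ x i ⊓ x i')).image x
        = Finset.Icc ⊥ (x i ⊓ x i') := by
      ext z
      simp only [Finset.mem_image, Finset.mem_filter, Finset.mem_univ, true_and,
        Finset.mem_Icc, bot_le]
      constructor
      · rintro ⟨k, hk, rfl⟩; exact hk
      · intro hz
        obtain ⟨k, rfl⟩ := hlower i z (hz.trans inf_le_left)
        exact ⟨k, hz, rfl⟩
    rw [← Finset.sum_image (f := fun z => ∑ w ∈ Finset.Icc ⊥ z, g w * mu w z)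
      (g := x) (fun a _ b _ h => hinj h), himg]
    exact (hmob _).symm
  -- the inverse of the indicator matrix, via `invE`
  set e : ℕ → ℕ → ℝ := fun i' k' => if h : i' < n ∧ k' < n then
      (if x ⟨k', h.2⟩ ≤ x ⟨i', h.1⟩ then 1 else 0) else 0 with he_def
  have he01 : ∀ i' k', e i' k' = 0 ∨ e i' k' = 1 := by
    intro i' k'
    simp only [he_def]
    split_ifs <;> simp
  set B : Fin n → Fin n → ℂ := fun i j => ((invE e i.1 j.1 : ℝ) : ℂ) with hB
  have hEB : ∀ i j : Fin n, ∑ k : Fin n, E i k * B k j = if i = j then 1 else 0 := by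
    intro i j
    have key : ∀ k : Fin n, E i k * B k j
        = ((e i.1 k.1 * invE e k.1 j.1 : ℝ) : ℂ) := by
      intro k
      simp only [hE, hB, he_def, dif_pos (And.intro i.2 k.2), Fin.eta]
      split_ifs <;> push_cast <;> ring
    rw [Finset.sum_congr rfl (fun k _ => key k)]
    rw [← Complex.ofReal_sum]
    have hreal : ∑ k : Fin n, e i.1 k.1 * invE e k.1 j.1
        = if i.1 = j.1 then (1:ℝ) else 0 := by
      rw [Fin.sum_univ_eq_sum_range (fun k' => e i.1 k' * invE e k' j.1) n]
      have hcut : ∑ k' ∈ Finset.range n, e i.1 k' * invE e k' j.1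
          = ∑ k' ∈ Finset.range (i.1+1), e i.1 k' * invE e k' j.1 := by
        refine (Finset.sum_subset (Finset.range_subset_range.mpr i.2) ?_).symm
        intro k' hk' hk2
        simp only [Finset.mem_range] at hk' hk2
        have hii : e i.1 k' = 0 := by
          simp only [he_def]
          rw [dif_pos (And.intro i.2 hk')]
          rw [if_neg]
          intro hle
          have := hord ⟨k', hk'⟩ ⟨i.1, i.2⟩ (by simpa using hle)
          simp only [Fin.mk_le_mk, Fin.le_def] at this
          omega
        rw [hii, zero_mul]
      rw [hcut, Finset.sum_range_succ]
      have hdiag : e i.1 i.1 = 1 := by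
        simp only [he_def]
        rw [dif_pos (And.intro i.2 i.2), if_pos le_rfl]
      rw [hdiag, one_mul, invE_eq]
      ring
    rw [hreal]
    by_cases h : i = j
    · simp [h]
    · rw [if_neg (fun hv' => h (Fin.ext hv')), if_neg h]
      simp
  have hBE : ∀ m k : Fin n, ∑ i : Fin n, B m i * E i k = if m = k then 1 else 0 := by
    have h1 : (Matrix.of E) * (Matrix.of B) = 1 := by
      ext i j
      rw [Matrix.mul_apply]
      simpa [Matrix.one_apply] using hEB i j
    have h2 : (Matrix.of B) * (Matrix.of E) = 1 := mul_eq_one_comm.mp h1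
    intro m k
    have h3 := congrFun (congrFun h2 m) k
    rw [Matrix.mul_apply] at h3
    simpa [Matrix.one_apply] using h3
  -- transformed eigen equation
  set w : Fin n → ℂ := fun j => f (x j) * v j with hw
  have hstep1 : ∀ i, ∑ j : Fin n, g (x i ⊔ x j) * w j
      = lam * ∑ j : Fin n, g (x i ⊓ x j) * w j := by
    intro i
    have h0 := congrFun heig i
    simp only [Matrix.mulVec, dotProduct, Pi.smul_apply, smul_eq_mul,
      Matrix.of_apply] at h0
    have e1 : ∀ j, f (x i ⊓ x j) * v j = f (x i) * (g (x i ⊔ x j) * w j) := by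
      intro j
      have h2 := hsemi (x i) (x j)
      rw [hg, hw]
      have hne := hf (x i ⊔ x j)
      field_simp
      linear_combination v j * h2
    have e2 : ∀ j, f (x i ⊔ x j) * v j = f (x i) * (g (x i ⊓ x j) * w j) := by
      intro j
      have h2 := hsemi (x i) (x j)
      rw [hg, hw]
      have hne := hf (x i ⊓ x j)
      field_simp
      linear_combination v j * h2
    rw [Finset.sum_congr rfl (fun j _ => e1 j), Finset.sum_congr rfl (fun j _ => e2 j),
      ← Finset.mul_sum, ← Finset.mul_sum] at h0
    refine mul_left_cancel₀ (hf (x i)) ?_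
    rw [h0]
    ring
  -- the transformed vector u
  set u : Fin n → ℂ := fun k => ∑ j : Fin n, E j k * w j with hu
  have hwinv : ∀ j : Fin n, w j = ∑ k : Fin n, B k j * u k := by
    intro j
    have : ∑ k : Fin n, B k j * u k
        = ∑ k : Fin n, ∑ j' : Fin n, B k j * (E j' k * w j') := by
      refine Finset.sum_congr rfl fun k _ => ?_
      rw [hu, Finset.mul_sum]
    rw [this, Finset.sum_comm]
    have : ∀ j' : Fin n, ∑ k : Fin n, B k j * (E j' k * w j')
        = (if j' = j then 1 else 0) * w j' := by
      intro j'
      rw [← hEB j' j, Finset.sum_mul]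
      refine Finset.sum_congr rfl fun k _ => ?_
      ring
    rw [Finset.sum_congr rfl fun j' _ => this j']
    simp
  -- collapse of the right-hand side
  have hR : ∀ m : Fin n,
      ∑ i : Fin n, B m i * (∑ j : Fin n, g (x i ⊓ x j) * w j) = l m * u m := by
    intro m
    have h1 : ∀ i : Fin n, ∑ j : Fin n, g (x i ⊓ x j) * w j
        = ∑ k : Fin n, E i k * (l k * u k) := by
      intro i
      have h2 : ∀ j : Fin n, g (x i ⊓ x j) * w j
          = ∑ k : Fin n, E i k * (E j k * l k) * w j := by
        intro j
        rw [hfact i j, Finset.sum_mul]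
      rw [Finset.sum_congr rfl fun j _ => h2 j, Finset.sum_comm]
      refine Finset.sum_congr rfl fun k _ => ?_
      rw [hu, Finset.mul_sum, Finset.mul_sum]
      refine Finset.sum_congr rfl fun j _ => ?_
      ring
    rw [Finset.sum_congr rfl fun i _ => congrArg (B m i * ·) (h1 i)]
    have h3 : ∑ i : Fin n, B m i * (∑ k : Fin n, E i k * (l k * u k))
        = ∑ k : Fin n, (∑ i : Fin n, B m i * E i k) * (l k * u k) := by
      calc ∑ i : Fin n, B m i * (∑ k : Fin n, E i k * (l k * u k))
          = ∑ i : Fin n, ∑ k : Fin n, B m i * (E i k * (l k * u k)) :=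
            Finset.sum_congr rfl fun i _ => Finset.mul_sum _ _ _
        _ = ∑ k : Fin n, ∑ i : Fin n, B m i * (E i k * (l k * u k)) := Finset.sum_comm
        _ = ∑ k : Fin n, (∑ i : Fin n, B m i * E i k) * (l k * u k) := by
            refine Finset.sum_congr rfl fun k _ => ?_
            rw [Finset.sum_mul]
            exact Finset.sum_congr rfl fun i _ => by ring
    rw [h3]
    have h4 : ∀ k : Fin n, (∑ i : Fin n, B m i * E i k) * (l k * u k)
        = if m = k then l k * u k else 0 := by
      intro k
      rw [hBE m k]
      split_ifs <;> ring
    rw [Finset.sum_congr rfl fun k _ => h4 k, Finset.sum_ite_eq]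
    simp
  -- collapse of the left-hand side
  set C : Fin n → Fin n → ℂ :=
    fun m k => ∑ i : Fin n, ∑ j : Fin n, B m i * g (x i ⊔ x j) * B k j with hC
  have hL : ∀ m : Fin n,
      ∑ i : Fin n, B m i * (∑ j : Fin n, g (x i ⊔ x j) * w j)
        = ∑ k : Fin n, C m k * u k := by
    intro m
    calc ∑ i : Fin n, B m i * (∑ j : Fin n, g (x i ⊔ x j) * w j)
        = ∑ i : Fin n, ∑ j : Fin n, ∑ k : Fin n,
            B m i * g (x i ⊔ x j) * B k j * u k := by
          refine Finset.sum_congr rfl fun i _ => ?_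
          rw [Finset.mul_sum]
          refine Finset.sum_congr rfl fun j _ => ?_
          rw [hwinv j, Finset.mul_sum, Finset.mul_sum]
          exact Finset.sum_congr rfl fun k _ => by ring
      _ = ∑ i : Fin n, ∑ k : Fin n, ∑ j : Fin n,
            B m i * g (x i ⊔ x j) * B k j * u k :=
          Finset.sum_congr rfl fun i _ => Finset.sum_comm
      _ = ∑ k : Fin n, ∑ i : Fin n, ∑ j : Fin n,
            B m i * g (x i ⊔ x j) * B k j * u k := Finset.sum_comm
      _ = ∑ k : Fin n, C m k * u k := by
          refine Finset.sum_congr rfl fun k _ => ?_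
          rw [hC]
          rw [Finset.sum_mul]
          refine Finset.sum_congr rfl fun i _ => ?_
          rw [Finset.sum_mul]
  clear_value E e B w u C
  -- the main identity
  have hmain : ∀ m : Fin n, lam * (l m * u m) = ∑ k : Fin n, C m k * u k := by
    intro m
    have h5 : ∑ i : Fin n, B m i * (∑ j : Fin n, g (x i ⊔ x j) * w j)
        = ∑ i : Fin n, B m i * (lam * ∑ j : Fin n, g (x i ⊓ x j) * w j) :=
      Finset.sum_congr rfl fun i _ => by rw [hstep1 i]
    have h6 : ∑ i : Fin n, B m i * (lam * ∑ j : Fin n, g (x i ⊓ x j) * w j)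
        = lam * ∑ i : Fin n, B m i * (∑ j : Fin n, g (x i ⊓ x j) * w j) := by
      rw [Finset.mul_sum]
      exact Finset.sum_congr rfl fun i _ => by ring
    rw [← hL m, h5, h6, hR m]
  -- u is nonzero
  haveI : Nonempty (Fin n) := ⟨⟨0, hn⟩⟩
  have hu0 : u ≠ 0 := by
    intro h
    apply hv
    funext j
    have hwj : w j = 0 := by
      rw [hwinv j, h]
      simp
    rw [hw] at hwj
    simp only [] at hwj
    exact (mul_eq_zero.mp hwj).resolve_left (hf (x j))
  -- the two infima
  set c := ⨅ p : Fin n × Fin n, ‖f (x p.1 ⊔ x p.2)‖ with hc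
  obtain ⟨p0, hp0⟩ := Finite.exists_min
    (fun p : Fin n × Fin n => ‖f (x p.1 ⊔ x p.2)‖)
  have hceq : c = ‖f (x p0.1 ⊔ x p0.2)‖ :=
    le_antisymm (ciInf_le (Finite.bddBelow_range _) p0) (le_ciInf hp0)
  have hcpos : 0 < c := by rw [hceq]; exact norm_pos_iff.mpr (hf _)
  have hcle : ∀ i j : Fin n, ‖g (x i ⊔ x j)‖ ≤ c⁻¹ := by
    intro i j
    rw [hg, norm_inv]
    exact inv_anti₀ hcpos (ciInf_le (Finite.bddBelow_range _) (i, j))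
  set mg := ⨅ i, ‖l i‖ with hmg
  obtain ⟨i0, hi0⟩ := Finite.exists_min (fun i : Fin n => ‖l i‖)
  have hmeq : mg = ‖l i0‖ :=
    le_antisymm (ciInf_le (Finite.bddBelow_range _) i0) (le_ciInf hi0)
  have hmpos : 0 < mg := by rw [hmeq]; exact norm_pos_iff.mpr (hl0 _)
  -- row sums of B
  set R : Fin n → ℝ := fun i => ∑ j : Fin n, ‖B i j‖ with hRdef
  clear_value R
  have hRnonneg : ∀ i, 0 ≤ R i := by
    intro i
    rw [hRdef]
    exact Finset.sum_nonneg fun j _ => norm_nonneg _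
  have hRfib : ∀ i : Fin n, R i ≤ (Nat.fib (i.1 + 2) : ℝ) := by
    intro i
    have habs : ∀ j : Fin n, ‖B i j‖ = |invE e i.1 j.1| := by
      intro j; rw [hB]; rw [Complex.norm_real, Real.norm_eq_abs]
    have hR1 : R i = ∑ j : Fin n, |invE e i.1 j.1| := by
      rw [hRdef]
      exact Finset.sum_congr rfl fun j _ => habs j
    calc R i = ∑ j : Fin n, |invE e i.1 j.1| := hR1
      _ = ∑ j ∈ Finset.range n, |invE e i.1 j| :=
        Fin.sum_univ_eq_sum_range (fun j' => |invE e i.1 j'|) n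
      _ ≤ _ := invE_rowsum e he01 i.1 n i.2
  have hRn : ∀ i : Fin n, R i ≤ (Nat.fib (n+1) : ℝ) := by
    intro i
    refine (hRfib i).trans ?_
    have : i.1 + 2 ≤ n + 1 := by omega
    exact_mod_cast Nat.fib_mono this
  have hRsum : ∑ k : Fin n, R k ≤ (Nat.fib (n+3) : ℝ) - 2 := by
    calc ∑ k : Fin n, R k ≤ ∑ k : Fin n, (Nat.fib (k.1+2) : ℝ) :=
        Finset.sum_le_sum fun k _ => hRfib k
      _ = ∑ i ∈ Finset.range n, (Nat.fib (i+2) : ℝ) :=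
        Fin.sum_univ_eq_sum_range (fun i => (Nat.fib (i+2) : ℝ)) n
      _ = _ := fib_sum_shift n
  -- bound on the entries of C
  have hCB : ∀ m k : Fin n, ‖C m k‖ ≤ c⁻¹ * R m * R k := by
    intro m k
    have step1 : ‖C m k‖
        ≤ ∑ i : Fin n, ∑ j : Fin n, ‖B m i * g (x i ⊔ x j) * B k j‖ := by
      rw [hC]
      refine (norm_sum_le _ _).trans
        (Finset.sum_le_sum fun i _ => norm_sum_le _ _)
    have step2 : ∑ i : Fin n, ∑ j : Fin n, ‖B m i * g (x i ⊔ x j) * B k j‖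
        ≤ ∑ i : Fin n, ∑ j : Fin n, ‖B m i‖ * c⁻¹ * ‖B k j‖ := by
      refine Finset.sum_le_sum fun i _ => Finset.sum_le_sum fun j _ => ?_
      rw [norm_mul, norm_mul]
      exact mul_le_mul_of_nonneg_right
        (mul_le_mul_of_nonneg_left (hcle i j) (norm_nonneg _))
        (norm_nonneg _)
    have step3 : ∑ i : Fin n, ∑ j : Fin n, ‖B m i‖ * c⁻¹ * ‖B k j‖
        = c⁻¹ * R m * R k := by
      calc ∑ i : Fin n, ∑ j : Fin n, ‖B m i‖ * c⁻¹ * ‖B k j‖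
          = ∑ i : Fin n, ‖B m i‖ * c⁻¹ * ∑ j : Fin n, ‖B k j‖ :=
            Finset.sum_congr rfl fun i _ => (Finset.mul_sum _ _ _).symm
        _ = (∑ i : Fin n, ‖B m i‖) * c⁻¹ * ∑ j : Fin n, ‖B k j‖ := by
            rw [Finset.sum_mul, Finset.sum_mul]
        _ = c⁻¹ * R m * R k := by rw [hRdef]; ring
    exact le_of_le_of_eq (step1.trans step2) step3
  -- choose the coordinate with maximal absolute value
  obtain ⟨m, -, hm⟩ := Finset.exists_max_image Finset.univ
    (fun k => ‖u k‖) ⟨⟨0, hn⟩, Finset.mem_univ _⟩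
  have hum : 0 < ‖u m‖ := by
    have hex : ∃ k, u k ≠ 0 := by
      by_contra h
      push_neg at h
      exact hu0 (funext h)
    obtain ⟨k, hk⟩ := hex
    exact lt_of_lt_of_le (norm_pos_iff.mpr hk) (hm k (Finset.mem_univ k))
  set X : ℝ := (Nat.fib (n + 1) : ℝ) * ((Nat.fib (n + 3) : ℝ) - 2) with hX
  clear_value X
  have hchain : ‖lam‖ * ‖l m‖ * ‖u m‖
      ≤ c⁻¹ * X * ‖u m‖ := by
    have h7' : ‖lam * (l m * u m)‖
        = ‖lam‖ * ‖l m‖ * ‖u m‖ := by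
      rw [norm_mul, norm_mul, mul_assoc]
    rw [← h7', hmain m]
    calc ‖∑ k : Fin n, C m k * u k‖
        ≤ ∑ k : Fin n, ‖C m k‖ * ‖u k‖ := by
          refine (norm_sum_le _ _).trans ?_
          exact le_of_eq (Finset.sum_congr rfl fun k _ => norm_mul _ _)
      _ ≤ ∑ k : Fin n, (c⁻¹ * R m * R k) * ‖u m‖ := by
          refine Finset.sum_le_sum fun k _ => ?_
          refine mul_le_mul (hCB m k) (hm k (Finset.mem_univ k))
            (norm_nonneg _) ?_
          have := hRnonneg m
          have := hRnonneg k
          have := hcpos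
          positivity
      _ = (c⁻¹ * R m * ∑ k : Fin n, R k) * ‖u m‖ := by
          rw [← Finset.sum_mul, ← Finset.mul_sum]
      _ ≤ c⁻¹ * X * ‖u m‖ := by
          refine mul_le_mul_of_nonneg_right ?_ (norm_nonneg _)
          rw [hX, ← mul_assoc]
          have hs0 : 0 ≤ ∑ k : Fin n, R k := Finset.sum_nonneg fun k _ => hRnonneg k
          have hfib0 : (0:ℝ) ≤ (Nat.fib (n+1) : ℝ) := by positivity
          have h1 : R m * (∑ k : Fin n, R k) ≤ (Nat.fib (n+1) : ℝ) * ((Nat.fib (n+3) : ℝ) - 2) :=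
            mul_le_mul (hRn m) hRsum hs0 hfib0
          calc c⁻¹ * R m * (∑ k : Fin n, R k) = c⁻¹ * (R m * ∑ k : Fin n, R k) := by ring
            _ ≤ c⁻¹ * ((Nat.fib (n+1) : ℝ) * ((Nat.fib (n+3) : ℝ) - 2)) :=
              mul_le_mul_of_nonneg_left h1 (by positivity)
            _ = c⁻¹ * (Nat.fib (n+1) : ℝ) * ((Nat.fib (n+3) : ℝ) - 2) := by ring
  have h8 : ‖lam‖ * ‖l m‖ ≤ c⁻¹ * X :=
    le_of_mul_le_mul_right hchain hum
  have h9 : mg ≤ ‖l m‖ := ciInf_le (Finite.bddBelow_range _) m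
  have h10 : ‖lam‖ * mg ≤ c⁻¹ * X :=
    le_trans (mul_le_mul_of_nonneg_left h9 (norm_nonneg _)) h8
  have h11 : ‖lam‖ ≤ c⁻¹ * X / mg := (le_div_iff₀ hmpos).mpr h10
  calc ‖lam‖ ≤ c⁻¹ * X / mg := h11
    _ = c⁻¹ * mg⁻¹ * X := by rw [div_eq_mul_inv]; ring
end

section
/- Let S = {x_1, …, x_n} be a finite factor closed set of positive integers with x_1 < x_2 < … < x_n, let f be a semimultiplicative arithmetical function with f(x) ≠ 0 for all positive integers x, and set g(x) = 1/f(x). Assume l_i = ∑_{z | x_i, z ∤ x_j for all j < i} (g *_D μ)(z) ≠ 0 for all i ∈ {1, …, n}. Then every λ ∈ ℂ for which (S)_f x = λ [S]_f x holds for some nonzero x ∈ ℂⁿ satisfies |λ| ≤ 2 · c_f⁻¹ · m_g⁻¹ · √(x_n) · ∑_{j=1}^n τ(x_j), where c_f = min_{1≤i,j≤n} |f(lcm(x_i, x_j))|, m_g = min_{1≤i≤n} |l_i|, and τ is the number-of-divisors function. -/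
set_option maxHeartbeats 1000000

open Matrix Finset

-- τ(m) ≤ 2 √m
lemma aux_tau_le (m : ℕ) (hm : 0 < m) : ((m.divisors.card : ℝ)) ≤ 2 * Real.sqrt m := by
  classical
  set s := m.divisors.filter (fun d => d ≤ m.sqrt) with hs
  have hsub : m.divisors ⊆ s ∪ s.image (fun d => m / d) := by
    intro d hd
    rcases le_or_gt d m.sqrt with h | h
    · exact mem_union_left _ (mem_filter.2 ⟨hd, h⟩)
    · refine mem_union_right _ (Finset.mem_image.2 ⟨m / d, ?_, ?_⟩)
      · have hdvd : d ∣ m := (Nat.mem_divisors.1 hd).1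
        refine mem_filter.2 ⟨Nat.mem_divisors.2 ⟨Nat.div_dvd_of_dvd hdvd, hm.ne'⟩, ?_⟩
        have hdpos : 0 < d := Nat.pos_of_mem_divisors hd
        have hlt : m < m.sqrt.succ * d :=
          lt_of_lt_of_le (Nat.lt_succ_sqrt m) (Nat.mul_le_mul_left _ h)
        exact Nat.le_of_lt_succ ((Nat.div_lt_iff_lt_mul hdpos).2 hlt)
      · exact Nat.div_div_self (Nat.mem_divisors.1 hd).1 hm.ne'
  have hcard : m.divisors.card ≤ 2 * s.card := by
    calc m.divisors.card ≤ (s ∪ s.image (fun d => m / d)).card := Finset.card_le_card hsub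
      _ ≤ s.card + (s.image (fun d => m / d)).card := Finset.card_union_le _ _
      _ ≤ s.card + s.card := Nat.add_le_add_left Finset.card_image_le _
      _ = 2 * s.card := (two_mul _).symm
  have hscard : s.card ≤ m.sqrt := by
    have : s ⊆ Finset.Icc 1 m.sqrt := by
      intro d hd
      rcases mem_filter.1 hd with ⟨hd1, hd2⟩
      exact Finset.mem_Icc.2 ⟨Nat.pos_of_mem_divisors hd1, hd2⟩
    simpa using Finset.card_le_card this
  have h1 : (m.sqrt : ℝ) ≤ Real.sqrt m := by
    calc (m.sqrt:ℝ) = Real.sqrt ((m.sqrt:ℝ)*(m.sqrt:ℝ)) := (Real.sqrt_mul_self (by positivity)).symm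
      _ ≤ Real.sqrt m := Real.sqrt_le_sqrt (by exact_mod_cast Nat.sqrt_le m)
  calc ((m.divisors.card : ℝ)) ≤ 2 * (m.sqrt : ℝ) := by exact_mod_cast hcard.trans (by omega)
    _ ≤ 2 * Real.sqrt m := by linarith

-- sum of moebius over divisors
lemma aux_moebius_sum (N : ℕ) :
    ∑ d ∈ N.divisors, ((ArithmeticFunction.moebius d : ℤ) : ℂ) = if N = 1 then 1 else 0 := by
  classical
  have h := congrArg (fun F : ArithmeticFunction ℤ => F N) ArithmeticFunction.moebius_mul_coe_zeta
  simp only [ArithmeticFunction.coe_mul_zeta_apply, ArithmeticFunction.one_apply] at h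
  rw [show (∑ d ∈ N.divisors, ((ArithmeticFunction.moebius d : ℤ) : ℂ))
      = ((∑ d ∈ N.divisors, ArithmeticFunction.moebius d : ℤ) : ℂ) by push_cast; rfl, h]
  split <;> simp

-- reindexing sums over indices k with x k ∣ m as sums over divisors of m
lemma aux_key {n : ℕ} (x : Fin n → ℕ) (hmono : StrictMono x) {M : Type*} [AddCommMonoid M]
    (m : ℕ) (hm : 0 < m) (hclosed : ∀ z, z ∣ m → ∃ k, x k = z) (G : ℕ → M) :
    ∑ k : Fin n, (if x k ∣ m then G (x k) else 0) = ∑ z ∈ m.divisors, G z := by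
  classical
  rw [← Finset.sum_filter]
  refine Finset.sum_bij (fun k _ => x k) ?_ ?_ ?_ ?_
  · intro k hk
    exact Nat.mem_divisors.2 ⟨(Finset.mem_filter.1 hk).2, hm.ne'⟩
  · intro k1 h1 k2 h2 h
    exact hmono.injective h
  · intro z hz
    obtain ⟨k, rfl⟩ := hclosed z (Nat.mem_divisors.1 hz).1
    exact ⟨k, Finset.mem_filter.2 ⟨Finset.mem_univ _, (Nat.mem_divisors.1 hz).1⟩, rfl⟩
  · intro k hk; rfl

-- reindexing a dvd-filtered divisor sum
lemma aux_filter_dvd (N a : ℕ) (hN : 0 < N) (ha : a ∣ N) (G : ℕ → ℂ) :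
    ∑ z ∈ N.divisors.filter (fun z => a ∣ z), G z = ∑ d ∈ (N/a).divisors, G (a * d) := by
  classical
  have ha0 : 0 < a := Nat.pos_of_dvd_of_pos ha hN
  have hNa : N / a ≠ 0 := (Nat.div_pos (Nat.le_of_dvd hN ha) ha0).ne'
  refine Finset.sum_nbij' (fun z => z / a) (fun d => a * d) ?_ ?_ ?_ ?_ ?_
  · intro z hz
    rcases Finset.mem_filter.1 hz with ⟨hz1, hz2⟩
    refine Nat.mem_divisors.2 ⟨?_, hNa⟩
    obtain ⟨c, rfl⟩ := hz2
    show a * c / a ∣ N / a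
    rw [Nat.mul_div_cancel_left _ ha0]
    exact (Nat.dvd_div_iff_mul_dvd ha).2 (Nat.mem_divisors.1 hz1).1
  · intro d hd
    have hd1 : a * d ∣ N := (Nat.dvd_div_iff_mul_dvd ha).1 (Nat.mem_divisors.1 hd).1
    exact Finset.mem_filter.2 ⟨Nat.mem_divisors.2 ⟨hd1, hN.ne'⟩, Dvd.intro d rfl⟩
  · intro z hz
    exact Nat.mul_div_cancel' (Finset.mem_filter.1 hz).2
  · intro d hd
    exact Nat.mul_div_cancel_left _ ha0
  · intro z hz
    rw [Nat.mul_div_cancel' (Finset.mem_filter.1 hz).2]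

/-- For a factor closed set `S = {x 0 < … < x (n-1)}` of positive
integers and a nonvanishing semimultiplicative arithmetical function `f` with invertible
LCM matrix, every generalized eigenvalue `λ` of the GCD matrix `(S)_f` with respect to
the LCM matrix `[S]_f` satisfies
`|λ| ≤ 2 c_f⁻¹ m_g⁻¹ √(x (n-1)) ∑_j τ (x j)`. -/
theorem gcd_wrt_lcm_eigenvalue_bound
    (f : ℕ → ℂ) (hf : ∀ m : ℕ, 0 < m → f m ≠ 0)
    (hsemi : ∀ a b : ℕ, 0 < a → 0 < b →
      f (Nat.gcd a b) * f (Nat.lcm a b) = f a * f b)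
    (g : ℕ → ℂ) (hg : ∀ m : ℕ, g m = (f m)⁻¹)
    {n : ℕ} (hn : 0 < n)
    (x : Fin n → ℕ) (hpos : ∀ i, 0 < x i) (hmono : StrictMono x)
    (hfc : ∀ i, ∀ z : ℕ, z ∣ x i → ∃ k, x k = z)
    (l : Fin n → ℂ)
    (hl : ∀ i, l i = ∑ z ∈ (Nat.divisors (x i)).filter
        (fun z => ∀ j, j < i → ¬ z ∣ x j),
      ∑ w ∈ Nat.divisors z, g w * ((ArithmeticFunction.moebius (z / w) : ℤ) : ℂ))
    (hl0 : ∀ i, l i ≠ 0)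
    (lam : ℂ) (v : Fin n → ℂ) (hv : v ≠ 0)
    (heig : (Matrix.of fun i j => f (Nat.gcd (x i) (x j))).mulVec v =
      lam • (Matrix.of fun i j => f (Nat.lcm (x i) (x j))).mulVec v) :
    ‖lam‖ ≤
      2 * (⨅ p : Fin n × Fin n, ‖f (Nat.lcm (x p.1) (x p.2))‖)⁻¹ *
        (⨅ i, ‖l i‖)⁻¹ *
        Real.sqrt (x ⟨n - 1, Nat.sub_lt hn one_pos⟩) *
        ∑ j : Fin n, ((Nat.divisors (x j)).card : ℝ) := by
  classical
  have hne : Nonempty (Fin n) := ⟨⟨0, hn⟩⟩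
  set last : Fin n := ⟨n - 1, Nat.sub_lt hn one_pos⟩ with hlast
  set μC : ℕ → ℂ := fun d => ((ArithmeticFunction.moebius d : ℤ) : ℂ) with hμC
  set hfun : ℕ → ℂ := fun z => ∑ w ∈ z.divisors, g w * μC (z / w) with hhfun
  -- step 1 : l k = hfun (x k)
  have hfilter : ∀ i, (Nat.divisors (x i)).filter (fun z => ∀ j, j < i → ¬ z ∣ x j) = {x i} := by
    intro i
    apply Finset.ext; intro z
    simp only [Finset.mem_filter, Nat.mem_divisors, Finset.mem_singleton]
    constructor
    · rintro ⟨⟨hzd, hz0⟩, hnd⟩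
      obtain ⟨j, rfl⟩ := hfc i z hzd
      by_contra hne'
      have hji : j ≠ i := fun h => hne' (by rw [h])
      rcases lt_or_gt_of_ne hji with h | h
      · exact hnd j h dvd_rfl
      · exact absurd (hmono h) (not_lt.2 (Nat.le_of_dvd (hpos i) hzd))
    · rintro rfl
      refine ⟨⟨dvd_rfl, (hpos i).ne'⟩, fun j hj hdvd => ?_⟩
      exact absurd (hmono hj) (not_lt.2 (Nat.le_of_dvd (hpos j) hdvd))
  have hlk : ∀ k, l k = hfun (x k) := by
    intro k
    rw [hl, hfilter, Finset.sum_singleton]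
  -- step 2 : Möbius inversion : ∑_{z ∣ m} hfun z = g m
  have hinv : ∀ m : ℕ, 0 < m → ∑ z ∈ m.divisors, hfun z = g m := by
    have H := (ArithmeticFunction.sum_eq_iff_sum_mul_moebius_eq (R := ℂ)
        (f := hfun) (g := g)).mpr ?_
    · exact fun m hm => H m hm
    · intro N hN
      rw [Nat.sum_divisorsAntidiagonal'
        (f := fun a b => ((ArithmeticFunction.moebius a : ℤ) : ℂ) * g b)]
      exact Finset.sum_congr rfl (fun w hw => mul_comm _ _)
  -- matrices
  set A : Matrix (Fin n) (Fin n) ℂ :=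
    Matrix.of (fun i j => f (Nat.gcd (x i) (x j))) with hA
  set B : Matrix (Fin n) (Fin n) ℂ :=
    Matrix.of (fun i j => f (Nat.lcm (x i) (x j))) with hB'
  set E : Matrix (Fin n) (Fin n) ℂ :=
    Matrix.of (fun i j => if x j ∣ x i then (1:ℂ) else 0) with hE
  set F : Matrix (Fin n) (Fin n) ℂ :=
    Matrix.of (fun i j => if x j ∣ x i then μC (x i / x j) else 0) with hF
  set L : Matrix (Fin n) (Fin n) ℂ := Matrix.diagonal (fun i => f (x i)) with hL
  set L' : Matrix (Fin n) (Fin n) ℂ := Matrix.diagonal (fun i => (f (x i))⁻¹) with hL'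
  set D : Matrix (Fin n) (Fin n) ℂ := Matrix.diagonal l with hD
  set D' : Matrix (Fin n) (Fin n) ℂ := Matrix.diagonal (fun i => (l i)⁻¹) with hD'
  -- E * F = 1
  have hEF : E * F = 1 := by
    ext i j
    rw [Matrix.mul_apply, Matrix.one_apply]
    have hterm : ∀ k, E i k * F k j
        = if x k ∣ x i then (if x j ∣ x k then μC (x k / x j) else 0) else 0 := by
      intro k
      by_cases h1 : x k ∣ x i <;> by_cases h2 : x j ∣ x k <;>
        simp [hE, hF, h1, h2]
    rw [Finset.sum_congr rfl (fun k _ => hterm k),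
      aux_key x hmono (x i) (hpos i) (hfc i) (fun z => if x j ∣ z then μC (z / x j) else 0),
      ← Finset.sum_filter]
    by_cases hji : x j ∣ x i
    · rw [aux_filter_dvd (x i) (x j) (hpos i) hji (fun z => μC (z / x j))]
      rw [Finset.sum_congr rfl (fun d _ => by
        rw [Nat.mul_div_cancel_left d (hpos j)]),
        aux_moebius_sum]
      have hiff : x i / x j = 1 ↔ i = j := by
        constructor
        · intro h
          apply hmono.injective
          have := Nat.div_mul_cancel hji
          rw [h, one_mul] at this
          exact this.symm
        · rintro rfl
          exact Nat.div_self (hpos i)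
      simp only [hiff]
    · have hij : i ≠ j := by rintro rfl; exact hji dvd_rfl
      rw [if_neg hij]
      apply Finset.sum_eq_zero
      intro z hz
      rcases Finset.mem_filter.1 hz with ⟨hz1, hz2⟩
      exact absurd (hz2.trans (Nat.mem_divisors.1 hz1).1) hji
  have hFE : F * E = 1 := mul_eq_one_comm.mp hEF
  -- scalar identity
  have hscal : ∀ a b : ℕ, 0 < a → 0 < b →
      (f a)⁻¹ * f (Nat.gcd a b) * (f b)⁻¹ = (f (Nat.lcm a b))⁻¹ := by
    intro a b ha hb
    have h1 := hsemi a b ha hb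
    have ha0 := hf a ha
    have hb0 := hf b hb
    have hl0' := hf _ (Nat.lcm_pos ha hb)
    have hg0 := hf _ (Nat.gcd_pos_of_pos_left b ha)
    field_simp
    linear_combination h1
  -- B factorization
  have hgcdpos : ∀ i j : Fin n, 0 < Nat.gcd (x i) (x j) :=
    fun i j => Nat.gcd_pos_of_pos_left _ (hpos i)
  have hB : B = L * E * D * Eᵀ * L := by
    rw [hB', hL, hE, hD]
    ext i j
    rw [Matrix.mul_diagonal, Matrix.mul_apply]
    simp only [Matrix.mul_diagonal, Matrix.diagonal_mul, Matrix.transpose_apply, Matrix.of_apply]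
    have hterm : ∀ k : Fin n, f (x i) * (if x k ∣ x i then (1:ℂ) else 0) * l k *
          (if x k ∣ x j then (1:ℂ) else 0)
        = f (x i) * (if x k ∣ Nat.gcd (x i) (x j) then hfun (x k) else 0) := by
      intro k
      rw [hlk k]
      by_cases h1 : x k ∣ x i <;> by_cases h2 : x k ∣ x j <;>
        simp [h1, h2, Nat.dvd_gcd_iff, mul_comm, mul_assoc]
    rw [Finset.sum_congr rfl (fun k _ => hterm k), ← Finset.mul_sum,
      aux_key x hmono (Nat.gcd (x i) (x j)) (hgcdpos i j)
        (fun z hz => hfc i z (hz.trans (Nat.gcd_dvd_left _ _))) hfun,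
      hinv _ (hgcdpos i j), hg]
    have h1 := hsemi (x i) (x j) (hpos i) (hpos j)
    have hg0 := hf _ (hgcdpos i j)
    show f (Nat.lcm (x i) (x j)) = f (x i) * (f (Nat.gcd (x i) (x j)))⁻¹ * f (x j)
    field_simp
    linear_combination h1
  -- cancellation helper
  have cancel : ∀ (X Y M : Matrix (Fin n) (Fin n) ℂ), X * Y = 1 → X * (Y * M) = M := by
    intro X Y M h; rw [← Matrix.mul_assoc, h, Matrix.one_mul]
  have hLL' : L * L' = 1 := by
    rw [hL, hL', Matrix.diagonal_mul_diagonal,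
      show (fun i => f (x i) * (f (x i))⁻¹) = fun _ : Fin n => (1:ℂ) from
        funext fun i => mul_inv_cancel₀ (hf _ (hpos i)), Matrix.diagonal_one]
  have hL'L : L' * L = 1 := by
    rw [hL, hL', Matrix.diagonal_mul_diagonal,
      show (fun i => (f (x i))⁻¹ * f (x i)) = fun _ : Fin n => (1:ℂ) from
        funext fun i => inv_mul_cancel₀ (hf _ (hpos i)), Matrix.diagonal_one]
  have hDD' : D * D' = 1 := by
    rw [hD, hD', Matrix.diagonal_mul_diagonal,
      show (fun i => l i * (l i)⁻¹) = fun _ : Fin n => (1:ℂ) from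
        funext fun i => mul_inv_cancel₀ (hl0 i), Matrix.diagonal_one]
  have hETFT : Eᵀ * Fᵀ = 1 := by
    rw [← Matrix.transpose_mul, hFE, Matrix.transpose_one]
  set P : Matrix (Fin n) (Fin n) ℂ := L' * (Fᵀ * (D' * (F * L'))) with hP
  have hBP : B * P = 1 := by
    rw [hB, hP]
    simp only [Matrix.mul_assoc]
    rw [cancel _ _ _ hLL', cancel _ _ _ hETFT, cancel _ _ _ hDD', cancel _ _ _ hEF, hLL']
  set T : Matrix (Fin n) (Fin n) ℂ := L' * A * L' * Fᵀ * D' * F with hT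
  -- determinant chain
  have hdet : (T - lam • 1).det = 0 := by
    have h1 : (A - lam • B).mulVec v = 0 := by
      rw [Matrix.sub_mulVec, Matrix.smul_mulVec, heig, sub_self]
    have h2 : (A - lam • B).det = 0 :=
      Matrix.exists_mulVec_eq_zero_iff.mp ⟨v, hv, h1⟩
    have h3 : (A - lam • B) * P = A * P - lam • (1 : Matrix (Fin n) (Fin n) ℂ) := by
      rw [Matrix.sub_mul, Matrix.smul_mul, hBP]
    have h4 : (A * P - lam • (1 : Matrix (Fin n) (Fin n) ℂ)).det = 0 := by
      rw [← h3, Matrix.det_mul, h2, zero_mul]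
    have h5 : T - lam • 1 = L' * ((A * P - lam • (1:Matrix (Fin n) (Fin n) ℂ)) * L) := by
      rw [Matrix.sub_mul, Matrix.mul_sub]
      congr 1
      · rw [hT, hP]
        simp only [Matrix.mul_assoc, hL'L, Matrix.mul_one]
      · rw [Matrix.smul_mul, Matrix.one_mul, Matrix.mul_smul, hL'L]
    rw [h5, Matrix.det_mul, Matrix.det_mul, h4, zero_mul, mul_zero]
  obtain ⟨u, hu0, huT⟩ := Matrix.exists_mulVec_eq_zero_iff.mpr hdet
  have hueq : T.mulVec u = lam • u := by
    rw [Matrix.sub_mulVec, Matrix.smul_mulVec, Matrix.one_mulVec, sub_eq_zero] at huT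
    exact huT
  
  -- infima
  set c := ⨅ p : Fin n × Fin n, ‖f (Nat.lcm (x p.1) (x p.2))‖ with hc
  set mg := ⨅ i, ‖l i‖ with hmg
  have hcle : ∀ i k : Fin n, c ≤ ‖f (Nat.lcm (x i) (x k))‖ := by
    intro i k
    exact ciInf_le (Set.Finite.bddBelow (Set.finite_range _)) (⟨i, k⟩ : Fin n × Fin n)
  have hcpos : 0 < c := by
    obtain ⟨p0, hp0⟩ := Finite.exists_min
      (fun p : Fin n × Fin n => ‖f (Nat.lcm (x p.1) (x p.2))‖)
    have h1 : 0 < ‖f (Nat.lcm (x p0.1) (x p0.2))‖ :=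
      norm_pos_iff.2 (hf _ (Nat.lcm_pos (hpos _) (hpos _)))
    exact lt_of_lt_of_le h1 (le_ciInf hp0)
  have hmgle : ∀ s, mg ≤ ‖l s‖ := fun s =>
    ciInf_le (Set.Finite.bddBelow (Set.finite_range _)) s
  have hmgpos : 0 < mg := by
    obtain ⟨s0, hs0⟩ := Finite.exists_min (fun s : Fin n => ‖l s‖)
    exact lt_of_lt_of_le (norm_pos_iff.2 (hl0 s0)) (le_ciInf hs0)
  have hcinv : (0:ℝ) ≤ c⁻¹ := inv_nonneg.2 hcpos.le
  have hmginv : (0:ℝ) ≤ mg⁻¹ := inv_nonneg.2 hmgpos.le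
  have habs0 : ∀ z : ℂ, 0 ≤ ‖z‖ := fun z => norm_nonneg z
  -- counting
  have hcount : ∀ s : Fin n, (∑ k : Fin n, if x k ∣ x s then (1:ℝ) else 0)
      = ((x s).divisors.card : ℝ) := by
    intro s
    rw [aux_key x hmono (x s) (hpos s) (hfc s) (fun _ => (1:ℝ))]
    simp
  -- T entries
  have hTentry : ∀ i j, T i j
      = ∑ s : Fin n, (∑ k : Fin n, (f (Nat.lcm (x i) (x k)))⁻¹ * F s k) * (l s)⁻¹ * F s j := by
    intro i j
    rw [hT, hL', hD', Matrix.mul_apply]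
    refine Finset.sum_congr rfl fun s _ => ?_
    rw [Matrix.mul_diagonal]
    congr 1
    congr 1
    rw [Matrix.mul_apply]
    refine Finset.sum_congr rfl fun k _ => ?_
    rw [Matrix.transpose_apply, Matrix.mul_diagonal, Matrix.diagonal_mul]
    congr 1
    rw [hA]
    exact hscal (x i) (x k) (hpos i) (hpos k)
  -- F entry bound
  have hFabs : ∀ s k, ‖F s k‖ ≤ (if x k ∣ x s then (1:ℝ) else 0) := by
    intro s k
    by_cases h : x k ∣ x s
    · rw [hF]
      simp only [Matrix.of_apply, if_pos h, hμC]
      rw [Complex.norm_intCast]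
      exact_mod_cast ArithmeticFunction.abs_moebius_le_one
    · rw [hF]; simp [h]
  -- bound on T entries
  have hTbound : ∀ i j, ‖T i j‖
      ≤ ∑ s : Fin n, c⁻¹ * ((x s).divisors.card : ℝ) * mg⁻¹
          * (if x j ∣ x s then (1:ℝ) else 0) := by
    intro i j
    rw [hTentry i j]
    refine (norm_sum_le _ _).trans ?_
    refine Finset.sum_le_sum fun s _ => ?_
    rw [norm_mul, norm_mul, norm_inv]
    have h1 : ‖∑ k : Fin n, (f (Nat.lcm (x i) (x k)))⁻¹ * F s k‖
        ≤ c⁻¹ * ((x s).divisors.card : ℝ) := by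
      refine (norm_sum_le _ _).trans ?_
      have h2 : ∀ k : Fin n, ‖(f (Nat.lcm (x i) (x k)))⁻¹ * F s k‖
          ≤ c⁻¹ * (if x k ∣ x s then (1:ℝ) else 0) := by
        intro k
        rw [norm_mul, norm_inv]
        exact mul_le_mul (inv_anti₀ hcpos (hcle i k)) (hFabs s k) (habs0 _) hcinv
      refine (Finset.sum_le_sum fun k _ => h2 k).trans ?_
      rw [← Finset.mul_sum, hcount s]
    have h2 : (‖l s‖)⁻¹ ≤ mg⁻¹ := inv_anti₀ hmgpos (hmgle s)
    have h4 : (0:ℝ) ≤ c⁻¹ * ((x s).divisors.card : ℝ) := mul_nonneg hcinv (by positivity)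
    exact mul_le_mul (mul_le_mul h1 h2 (inv_nonneg.2 (habs0 _)) h4) (hFabs s j)
      (habs0 _) (mul_nonneg h4 hmginv)
  -- row sums
  have hrow : ∀ i, ∑ j : Fin n, ‖T i j‖
      ≤ c⁻¹ * mg⁻¹ * ∑ s : Fin n, ((x s).divisors.card : ℝ)^2 := by
    intro i
    refine (Finset.sum_le_sum fun j _ => hTbound i j).trans (le_of_eq ?_)
    rw [Finset.sum_comm]
    have hss : ∀ s : Fin n, ∑ j : Fin n, c⁻¹ * ((x s).divisors.card : ℝ) * mg⁻¹
          * (if x j ∣ x s then (1:ℝ) else 0)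
        = c⁻¹ * mg⁻¹ * ((x s).divisors.card : ℝ)^2 := by
      intro s
      rw [← Finset.mul_sum, hcount s]
      ring
    rw [Finset.sum_congr rfl fun s _ => hss s, ← Finset.mul_sum]
  -- last element bound
  have hle_last : ∀ s : Fin n, x s ≤ x last := by
    intro s
    apply hmono.monotone
    rw [Fin.le_def, hlast]
    show (s:ℕ) ≤ n - 1
    have := s.isLt
    omega
  have hsq : ∀ s : Fin n, ((x s).divisors.card : ℝ)^2
      ≤ 2 * Real.sqrt (x last) * ((x s).divisors.card : ℝ) := by
    intro s
    have h1 := aux_tau_le (x s) (hpos s)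
    have h2 : Real.sqrt (x s) ≤ Real.sqrt (x last) :=
      Real.sqrt_le_sqrt (by exact_mod_cast hle_last s)
    have h3 : (0:ℝ) ≤ ((x s).divisors.card : ℝ) := Nat.cast_nonneg _
    calc ((x s).divisors.card : ℝ)^2
        = ((x s).divisors.card : ℝ) * ((x s).divisors.card : ℝ) := sq ((x s).divisors.card : ℝ)
      _ ≤ (2 * Real.sqrt (x s)) * ((x s).divisors.card : ℝ) :=
          mul_le_mul_of_nonneg_right h1 h3
      _ ≤ 2 * Real.sqrt (x last) * ((x s).divisors.card : ℝ) :=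
          mul_le_mul_of_nonneg_right (by linarith) h3
  -- eigen equation at max coordinate
  obtain ⟨j0, hj0ne⟩ := Function.ne_iff.1 hu0
  obtain ⟨i0, -, hmax⟩ := Finset.exists_max_image Finset.univ
    (fun i => ‖u i‖) ⟨j0, Finset.mem_univ _⟩
  have hupos : 0 < ‖u i0‖ :=
    lt_of_lt_of_le (norm_pos_iff.2 hj0ne) (hmax j0 (Finset.mem_univ _))
  have heq2 : lam * u i0 = ∑ j : Fin n, T i0 j * u j := by
    have h6 := congrFun hueq i0
    simp only [Matrix.mulVec, dotProduct, Pi.smul_apply, smul_eq_mul] at h6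
    exact h6.symm
  have hlam : ‖lam‖ ≤ ∑ j : Fin n, ‖T i0 j‖ := by
    have h7 : ‖lam‖ * ‖u i0‖
        ≤ (∑ j : Fin n, ‖T i0 j‖) * ‖u i0‖ := by
      rw [← norm_mul, heq2]
      refine (norm_sum_le _ _).trans ?_
      rw [Finset.sum_mul]
      refine Finset.sum_le_sum fun j _ => ?_
      rw [norm_mul]
      exact mul_le_mul_of_nonneg_left (hmax j (Finset.mem_univ _)) (habs0 _)
    exact le_of_mul_le_mul_right h7 hupos
  calc ‖lam‖ ≤ ∑ j : Fin n, ‖T i0 j‖ := hlam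
    _ ≤ c⁻¹ * mg⁻¹ * ∑ s : Fin n, ((x s).divisors.card : ℝ)^2 := hrow i0
    _ ≤ c⁻¹ * mg⁻¹ * ∑ s : Fin n, 2 * Real.sqrt (x last) * ((x s).divisors.card : ℝ) :=
        mul_le_mul_of_nonneg_left (Finset.sum_le_sum fun s _ => hsq s)
          (mul_nonneg hcinv hmginv)
    _ = 2 * c⁻¹ * mg⁻¹ * Real.sqrt (x last) * ∑ j : Fin n, ((x j).divisors.card : ℝ) := by
        rw [← Finset.mul_sum]
        ring
end

section
/- Let (P, ≼, ∧, ∨) be a locally finite lattice with least element 0̂, let f be a semimultiplicative complex-valued function on P with f(x) ≠ 0 for all x ∈ P, and let S = {x_1, …, x_n} be a finite meet closed subset of P with distinct elements, indexed so that x_i ≼ x_j only if i ≤ j. Assume d_i = ∑_{z ≼ x_i, z ⋠ x_j for all j < i} (f_d * μ)(0̂, z) ≠ 0 for all i ∈ {1, …, n}. Then for every λ ∈ ℂ: there exists a nonzero x ∈ ℂⁿ with [S]_f x = λ (S)_f x if and only if there exists a nonzero y ∈ ℂⁿ with D⁻¹ B y = λ y, where D = diag(d_1, …, d_n), B = E⁻¹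 [S]_f (E⁻¹)ᵀ, and E is the n×n matrix with E_{ij} = 1 if x_j ≼ x_i and E_{ij} = 0 otherwise. -/
open Matrix

section AuxMoebius
variable {P : Type*} [Lattice P] [OrderBot P] [LocallyFiniteOrder P]
    [DecidableRel ((· ≤ ·) : P → P → Prop)] [DecidableEq P]
    (mu : P → P → ℂ)
    (hmu_self : ∀ p, mu p p = 1)
    (hmu_lt : ∀ p q : P, p < q → mu p q = -∑ r ∈ Finset.Ico p q, mu p r)
    (hmu_nle : ∀ p q : P, ¬ p ≤ q → mu p q = 0)

include hmu_self hmu_lt in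
theorem aux_mu_icc_sum (w z : P) (h : w ≤ z) :
    ∑ r ∈ Finset.Icc w z, mu w r = if w = z then 1 else 0 := by
  rcases eq_or_lt_of_le h with rfl | hlt
  · simp [hmu_self]
  · rw [if_neg hlt.ne, ← Finset.Ico_insert_right h,
      Finset.sum_insert Finset.right_notMem_Ico, hmu_lt _ _ hlt]
    ring

include hmu_self hmu_lt hmu_nle in
theorem aux_mu_inversion (f : P → ℂ) (p : P) :
    ∑ z ∈ Finset.Icc ⊥ p, ∑ w ∈ Finset.Icc ⊥ z, f w * mu w z = f p := by
  have h1 : ∀ z ∈ Finset.Icc ⊥ p, ∑ w ∈ Finset.Icc ⊥ z, f w * mu w z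
      = ∑ w ∈ Finset.Icc ⊥ p, f w * mu w z := by
    intro z hz
    refine Finset.sum_subset (Finset.Icc_subset_Icc_right (Finset.mem_Icc.mp hz).2) ?_
    intro w _ hw
    have : ¬ w ≤ z := by simpa using hw
    rw [hmu_nle _ _ this, mul_zero]
  rw [Finset.sum_congr rfl h1, Finset.sum_comm]
  have h2 : ∀ w ∈ Finset.Icc ⊥ p, ∑ z ∈ Finset.Icc ⊥ p, f w * mu w z
      = if w = p then f w else 0 := by
    intro w hw
    rw [← Finset.mul_sum]
    have h3 : ∑ z ∈ Finset.Icc ⊥ p, mu w z = ∑ z ∈ Finset.Icc w p, mu w z := by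
      refine (Finset.sum_subset (Finset.Icc_subset_Icc_left bot_le) ?_).symm
      intro z _ hz
      have : ¬ w ≤ z := by
        simp only [Finset.mem_Icc] at *; tauto
      exact hmu_nle _ _ this
    rw [h3, aux_mu_icc_sum mu hmu_self hmu_lt w p (Finset.mem_Icc.mp hw).2]
    split <;> simp
  rw [Finset.sum_congr rfl h2, Finset.sum_ite_eq' _ p]
  simp
end AuxMoebius

/-- cancellation for `mulVec` with an explicit one-sided inverse -/
theorem aux_mulVec_cancel {n : ℕ} {M N : Matrix (Fin n) (Fin n) ℂ}
    (h : M * N = 1) (v : Fin n → ℂ) : M.mulVec (N.mulVec v) = v := by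
  rw [Matrix.mulVec_mulVec, h, Matrix.one_mulVec]

/-- Under invertibility of the meet matrix (encoded by `d i ≠ 0`), the
`(S)_f`-eigenvalues of `[S]_f` are precisely the eigenvalues of `D⁻¹ * B`, where
`D = diag(d)`, `B = E⁻¹ * [S]_f * (E⁻¹)ᵀ` and `E i j = 1` iff `x j ≼ x i`. -/
theorem generalized_eigenvalues_join_wrt_meet
    {P : Type*} [Lattice P] [OrderBot P] [LocallyFiniteOrder P]
    [DecidableRel ((· ≤ ·) : P → P → Prop)]
    (mu : P → P → ℂ)
    (hmu_self : ∀ p, mu p p = 1)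
    (hmu_lt : ∀ p q : P, p < q → mu p q = -∑ r ∈ Finset.Ico p q, mu p r)
    (hmu_nle : ∀ p q : P, ¬ p ≤ q → mu p q = 0)
    (f : P → ℂ) (hf : ∀ p, f p ≠ 0)
    (hsemi : ∀ p q : P, f (p ⊓ q) * f (p ⊔ q) = f p * f q)
    {n : ℕ} (x : Fin n → P) (hinj : Function.Injective x)
    (hord : ∀ i j, x i ≤ x j → i ≤ j)
    (hmeet : ∀ i j, ∃ k, x k = x i ⊓ x j)
    (d : Fin n → ℂ)
    (hd : ∀ i, d i = ∑ z ∈ (Finset.Icc ⊥ (x i)).filter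
        (fun z => ∀ j, j < i → ¬ z ≤ x j),
      ∑ w ∈ Finset.Icc ⊥ z, f w * mu w z)
    (hd0 : ∀ i, d i ≠ 0)
    (E : Matrix (Fin n) (Fin n) ℂ)
    (hE : ∀ i j, E i j = if x j ≤ x i then 1 else 0)
    (D B : Matrix (Fin n) (Fin n) ℂ)
    (hD : D = Matrix.diagonal d)
    (hB : B = E⁻¹ * (Matrix.of fun i j => f (x i ⊔ x j)) * (E⁻¹)ᵀ) :
    ∀ lam : ℂ,
      (∃ v : Fin n → ℂ, v ≠ 0 ∧
          (Matrix.of fun i j => f (x i ⊔ x j)).mulVec v =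
            lam • (Matrix.of fun i j => f (x i ⊓ x j)).mulVec v) ↔
        (∃ y : Fin n → ℂ, y ≠ 0 ∧ (D⁻¹ * B).mulVec y = lam • y) := by
  classical
  intro lam
  set A : Matrix (Fin n) (Fin n) ℂ := Matrix.of fun i j => f (x i ⊔ x j) with hA
  set M : Matrix (Fin n) (Fin n) ℂ := Matrix.of fun i j => f (x i ⊓ x j) with hM
  -- the partition sum : for each m, ∑_{k : x k ≤ x m} d k = f (x m)
  have hsum : ∀ m : Fin n,
      ∑ k ∈ Finset.univ.filter (fun k => x k ≤ x m), d k = f (x m) := by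
    intro m
    set T : Fin n → Finset P := fun k =>
      (Finset.Icc ⊥ (x k)).filter (fun z => ∀ j, j < k → ¬ z ≤ x j) with hT
    set K : Finset (Fin n) := Finset.univ.filter (fun k => x k ≤ x m) with hK
    have hdisj : (K : Set (Fin n)).PairwiseDisjoint T := by
      intro a _ b _ hab
      refine Finset.disjoint_left.mpr ?_
      intro z hza hzb
      simp only [hT, Finset.mem_filter, Finset.mem_Icc] at hza hzb
      rcases lt_or_gt_of_ne hab with h | h
      · exact hzb.2 a h hza.1.2
      · exact hza.2 b h hzb.1.2
    have hcover : K.biUnion T = Finset.Icc ⊥ (x m) := by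
      ext z
      simp only [Finset.mem_biUnion, hT, hK, Finset.mem_filter, Finset.mem_Icc,
        Finset.mem_univ, true_and]
      constructor
      · rintro ⟨k, hk, ⟨-, hzk⟩, -⟩
        exact ⟨bot_le, hzk.trans hk⟩
      · rintro ⟨-, hzm⟩
        set F : Finset (Fin n) := Finset.univ.filter (fun k => z ≤ x k) with hF
        have hFne : F.Nonempty := ⟨m, by simp [hF, hzm]⟩
        set k := F.min' hFne with hk
        have hkF : k ∈ F := F.min'_mem hFne
        have hzk : z ≤ x k := by simpa [hF] using hkF
        have hmin : ∀ j, j < k → ¬ z ≤ x j := by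
          intro j hj hzj
          exact absurd (F.min'_le j (by simp [hF, hzj])) (not_le.mpr hj)
        have hkm : x k ≤ x m := by
          obtain ⟨l, hl⟩ := hmeet k m
          have hzl : z ≤ x l := hl ▸ le_inf hzk hzm
          have h1 : k ≤ l := F.min'_le l (by simp [hF, hzl])
          have h2 : l ≤ k := hord l k (hl ▸ inf_le_left)
          have : l = k := le_antisymm h2 h1
          rw [← this, hl]; exact inf_le_right
        exact ⟨k, hkm, ⟨bot_le, hzk⟩, hmin⟩
    calc ∑ k ∈ K, d k
        = ∑ k ∈ K, ∑ z ∈ T k, ∑ w ∈ Finset.Icc ⊥ z, f w * mu w z := by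
          exact Finset.sum_congr rfl fun k _ => hd k
      _ = ∑ z ∈ K.biUnion T, ∑ w ∈ Finset.Icc ⊥ z, f w * mu w z :=
          (Finset.sum_biUnion hdisj).symm
      _ = f (x m) := by
          rw [hcover]; exact aux_mu_inversion mu hmu_self hmu_lt hmu_nle f (x m)
  -- factorization M = E * D * Eᵀ
  have hfact : M = E * D * Eᵀ := by
    ext i j
    rw [hD, Matrix.mul_assoc]
    rw [Matrix.mul_apply]
    have : ∀ k, E i k * (Matrix.diagonal d * Eᵀ) k j
        = if x k ≤ x i ⊓ x j then d k else 0 := by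
      intro k
      rw [Matrix.diagonal_mul, Matrix.transpose_apply, hE, hE]
      by_cases h1 : x k ≤ x i <;> by_cases h2 : x k ≤ x j <;>
        simp [h1, h2, le_inf_iff]
    rw [Finset.sum_congr rfl fun k _ => this k, Finset.sum_ite, Finset.sum_const_zero,
      add_zero]
    obtain ⟨m, hm⟩ := hmeet i j
    have hMij : M i j = f (x m) := by simp [hM, hm]
    rw [hMij, ← hm]
    exact (hsum m).symm
  -- invertibility of E and D
  have hEdet : E.det = 1 := by
    have htri : E.BlockTriangular OrderDual.toDual := by
      intro i j hij
      have hij' : i < j := hij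
      rw [hE, if_neg]
      intro hle
      exact absurd (hord j i hle) (not_le.mpr hij')
    rw [Matrix.det_of_lowerTriangular E htri]
    refine Finset.prod_eq_one fun i _ => ?_
    rw [hE, if_pos le_rfl]
  have hEu : IsUnit E.det := by rw [hEdet]; exact isUnit_one
  have hDu : IsUnit D.det := by
    rw [hD, Matrix.det_diagonal]
    exact isUnit_iff_ne_zero.mpr (Finset.prod_ne_zero_iff.mpr fun i _ => hd0 i)
  have hEtu : IsUnit Eᵀ.det := by rwa [Matrix.det_transpose]
  have hE1 : E⁻¹ * E = 1 := Matrix.nonsing_inv_mul E hEu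
  have hE2 : E * E⁻¹ = 1 := Matrix.mul_nonsing_inv E hEu
  have hEt1 : (E⁻¹)ᵀ * Eᵀ = 1 := by
    rw [Matrix.transpose_nonsing_inv]
    exact Matrix.nonsing_inv_mul Eᵀ hEtu
  have hEt2 : Eᵀ * (E⁻¹)ᵀ = 1 := by
    rw [Matrix.transpose_nonsing_inv]
    exact Matrix.mul_nonsing_inv Eᵀ hEtu
  have hD1 : D⁻¹ * D = 1 := Matrix.nonsing_inv_mul D hDu
  have hD2 : D * D⁻¹ = 1 := Matrix.mul_nonsing_inv D hDu
  have cEt1 : ∀ w, (E⁻¹)ᵀ.mulVec (Eᵀ.mulVec w) = w := fun w => aux_mulVec_cancel hEt1 w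
  have cEt2 : ∀ w, Eᵀ.mulVec ((E⁻¹)ᵀ.mulVec w) = w := fun w => aux_mulVec_cancel hEt2 w
  have cE1 : ∀ w, E⁻¹.mulVec (E.mulVec w) = w := fun w => aux_mulVec_cancel hE1 w
  have cD1 : ∀ w, D⁻¹.mulVec (D.mulVec w) = w := fun w => aux_mulVec_cancel hD1 w
  have cD2 : ∀ w, D.mulVec (D⁻¹.mulVec w) = w := fun w => aux_mulVec_cancel hD2 w
  constructor
  · rintro ⟨v, hv0, hv⟩
    refine ⟨Eᵀ.mulVec v, ?_, ?_⟩
    · intro h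
      apply hv0
      have := congrArg ((E⁻¹)ᵀ.mulVec) h
      rwa [cEt1, Matrix.mulVec_zero] at this
    · rw [hfact] at hv
      simp only [← Matrix.mulVec_mulVec] at hv
      simp only [hB, ← Matrix.mulVec_mulVec, cEt1]
      rw [hv]
      simp only [Matrix.mulVec_smul, cE1, cD1]
  · rintro ⟨y, hy0, hy⟩
    refine ⟨(E⁻¹)ᵀ.mulVec y, ?_, ?_⟩
    · intro h
      apply hy0
      have := congrArg (Eᵀ.mulVec) h
      rwa [cEt2, Matrix.mulVec_zero] at this
    · have hAeq : A = E * (B * Eᵀ) := by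
        rw [hB]
        rw [Matrix.mul_assoc, Matrix.mul_assoc, hEt1, Matrix.mul_one,
          ← Matrix.mul_assoc, hE2, Matrix.one_mul]
      have hBy : B.mulVec y = D.mulVec (lam • y) := by
        simp only [← Matrix.mulVec_mulVec] at hy
        have := congrArg (D.mulVec) hy
        rwa [cD2] at this
      rw [hAeq, hfact]
      simp only [← Matrix.mulVec_mulVec, cEt2]
      rw [hBy]
      simp only [Matrix.mulVec_smul]
end

section
/- Let (P, ≼, ∧, ∨) be a locally finite lattice with least element 0̂, let f be a semimultiplicative complex-valued function on P with f(x) ≠ 0 for all x ∈ P, and let S = {x_1, …, x_n} be a finite lower closed subset of P with distinct elements, indexed so that x_i ≼ x_j only if i ≤ j. Assume d_i = ∑_{z ≼ x_i, z ⋠ x_j for all j < i} (f_d * μ)(0̂, z) ≠ 0 for all i. Then every (S)_f-eigenvalue λ ∈ ℂ of [S]_f lies in at least one of the n disks {z ∈ ℂ : |z − d_i⁻¹ ∑_{α,β=1}^n μ(x_α, x_i) μ(x_β, x_i) f(x_α ∨ x_β)| ≤ |d_i|⁻¹ ∑_{j≠i} |∑_{α,β=1}^n μ(x_α, x_i) μ(x_β,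 x_j) f(x_α ∨ x_β)|}, i ∈ {1, …, n}. -/
open Matrix

/-- **Gerschgorin disks, dual problem.** For lower closed `S`, every
`(S)_f`-eigenvalue `λ` of `[S]_f` lies in one of the `n` disks centred at
`d i⁻¹ ∑_{α,β} μ(x α, x i) μ(x β, x i) f (x α ∨ x β)` with radius
`|d i|⁻¹ ∑_{j ≠ i} |∑_{α,β} μ(x α, x i) μ(x β, x j) f (x α ∨ x β)|`. -/
theorem gerschgorin_disks_join_wrt_meet
    {P : Type*} [Lattice P] [OrderBot P] [LocallyFiniteOrder P]
    [DecidableRel ((· ≤ ·) : P → P → Prop)]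
    (mu : P → P → ℂ)
    (hmu_self : ∀ p, mu p p = 1)
    (hmu_lt : ∀ p q : P, p < q → mu p q = -∑ r ∈ Finset.Ico p q, mu p r)
    (hmu_nle : ∀ p q : P, ¬ p ≤ q → mu p q = 0)
    (f : P → ℂ) (hf : ∀ p, f p ≠ 0)
    (hsemi : ∀ p q : P, f (p ⊓ q) * f (p ⊔ q) = f p * f q)
    {n : ℕ} (x : Fin n → P) (hinj : Function.Injective x)
    (hord : ∀ i j, x i ≤ x j → i ≤ j)
    (hlower : ∀ i (z : P), z ≤ x i → ∃ k, x k = z)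
    (d : Fin n → ℂ)
    (hd : ∀ i, d i = ∑ z ∈ (Finset.Icc ⊥ (x i)).filter
        (fun z => ∀ j, j < i → ¬ z ≤ x j),
      ∑ w ∈ Finset.Icc ⊥ z, f w * mu w z)
    (hd0 : ∀ i, d i ≠ 0)
    (lam : ℂ) (v : Fin n → ℂ) (hv : v ≠ 0)
    (heig : (Matrix.of fun i j => f (x i ⊔ x j)).mulVec v =
      lam • (Matrix.of fun i j => f (x i ⊓ x j)).mulVec v) :
    ∃ i : Fin n,
      ‖lam - (d i)⁻¹ * ∑ α : Fin n, ∑ β : Fin n,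
          mu (x α) (x i) * mu (x β) (x i) * f (x α ⊔ x β)‖ ≤
        ‖d i‖⁻¹ * ∑ j ∈ Finset.univ.erase i,
          ‖∑ α : Fin n, ∑ β : Fin n,
            mu (x α) (x i) * mu (x β) (x j) * f (x α ⊔ x β)‖ := by
  classical
  -- the basic Möbius sum identity
  have hmusum : ∀ p q : P, p ≤ q →
      (∑ z ∈ Finset.Icc p q, mu p z) = if p = q then 1 else 0 := by
    intro p q hpq
    rcases eq_or_lt_of_le hpq with rfl | hlt
    · simp [hmu_self]
    · rw [if_neg hlt.ne, ← Finset.Ico_insert_right hpq,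
        Finset.sum_insert Finset.right_notMem_Ico, hmu_lt p q hlt]
      ring
  set g : P → ℂ := fun z => ∑ w ∈ Finset.Icc ⊥ z, f w * mu w z with hg
  -- Möbius inversion
  have hginv : ∀ y : P, ∑ z ∈ Finset.Icc ⊥ y, g z = f y := by
    intro y
    have h1 : ∀ z ∈ Finset.Icc ⊥ y, g z = ∑ w ∈ Finset.Icc ⊥ y, f w * mu w z := by
      intro z hz
      rw [Finset.mem_Icc] at hz
      exact Finset.sum_subset (Finset.Icc_subset_Icc_right hz.2)
        (fun w hw hwz => by
          rw [hmu_nle w z (by simpa [Finset.mem_Icc] using hwz), mul_zero])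
    rw [Finset.sum_congr rfl h1, Finset.sum_comm]
    have h2 : ∀ w ∈ Finset.Icc ⊥ y, (∑ z ∈ Finset.Icc ⊥ y, f w * mu w z)
        = f w * (if w = y then 1 else 0) := by
      intro w hw
      rw [Finset.mem_Icc] at hw
      rw [← Finset.mul_sum]
      congr 1
      rw [← hmusum w y hw.2]
      refine (Finset.sum_subset (Finset.Icc_subset_Icc_left bot_le) ?_).symm
      intro z hz hz'
      rw [Finset.mem_Icc] at hz
      exact hmu_nle w z (fun h => hz' (Finset.mem_Icc.mpr ⟨h, hz.2⟩))
    rw [Finset.sum_congr rfl h2]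
    simp
  -- d i = g (x i)
  have hdg : ∀ i, d i = g (x i) := by
    intro i
    rw [hd i]
    have hset : (Finset.Icc ⊥ (x i)).filter (fun z => ∀ j, j < i → ¬ z ≤ x j) = {x i} := by
      apply Finset.eq_singleton_iff_unique_mem.mpr
      constructor
      · rw [Finset.mem_filter, Finset.mem_Icc]
        exact ⟨⟨bot_le, le_rfl⟩, fun j hj hle => absurd (hord i j hle) (not_le.mpr hj)⟩
      · intro z hz
        rw [Finset.mem_filter, Finset.mem_Icc] at hz
        obtain ⟨k, hk⟩ := hlower i z hz.1.2
        have hki : k ≤ i := hord k i (by rw [hk]; exact hz.1.2)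
        rcases lt_or_eq_of_le hki with h | h
        · exact absurd (le_of_eq hk.symm) (hz.2 k h)
        · rw [← hk, h]
    rw [hset, Finset.sum_singleton]
  -- transfer sums over down-sets to sums over indices
  have hsumtr : ∀ (p : P) (i : Fin n), p ≤ x i → ∀ (h : P → ℂ),
      (∑ k ∈ Finset.univ.filter (fun k => x k ≤ p), h (x k))
        = ∑ z ∈ Finset.Icc ⊥ p, h z := by
    intro p i hpi h
    have himg : (Finset.univ.filter (fun k => x k ≤ p)).image x = Finset.Icc ⊥ p := by
      ext z
      simp only [Finset.mem_image, Finset.mem_filter, Finset.mem_univ, true_and,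
        Finset.mem_Icc]
      constructor
      · rintro ⟨k, hk, rfl⟩; exact ⟨bot_le, hk⟩
      · rintro ⟨-, hz⟩
        obtain ⟨k, rfl⟩ := hlower i z (hz.trans hpi)
        exact ⟨k, hz, rfl⟩
    rw [← himg, Finset.sum_image (fun a _ b _ hab => hinj hab)]
  set E : Matrix (Fin n) (Fin n) ℂ := Matrix.of fun i k => if x k ≤ x i then (1:ℂ) else 0
    with hE
  set N : Matrix (Fin n) (Fin n) ℂ := Matrix.of fun i k => mu (x k) (x i) with hN
  have hEN : E * N = 1 := by
    ext i j
    rw [Matrix.mul_apply]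
    have hterm : ∀ k, E i k * N k j = if x k ≤ x i then mu (x j) (x k) else 0 := by
      intro k
      simp only [hE, hN, Matrix.of_apply]
      split <;> simp
    rw [Finset.sum_congr rfl (fun k _ => hterm k), ← Finset.sum_filter,
      hsumtr (x i) i le_rfl (fun z => mu (x j) z)]
    by_cases hji : x j ≤ x i
    · have hrestr : (∑ z ∈ Finset.Icc ⊥ (x i), mu (x j) z)
          = ∑ z ∈ Finset.Icc (x j) (x i), mu (x j) z := by
        refine (Finset.sum_subset (Finset.Icc_subset_Icc_left bot_le) ?_).symm
        intro z hz hz'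
        rw [Finset.mem_Icc] at hz
        exact hmu_nle _ _ (fun h => hz' (Finset.mem_Icc.mpr ⟨h, hz.2⟩))
      rw [hrestr, hmusum _ _ hji, Matrix.one_apply]
      by_cases hij : i = j
      · subst hij; simp
      · rw [if_neg (fun h => hij (hinj h).symm), if_neg hij]
    · have hz0 : ∀ z ∈ Finset.Icc ⊥ (x i), mu (x j) z = 0 := fun z hz =>
        hmu_nle _ _ (fun h => hji (h.trans (Finset.mem_Icc.mp hz).2))
      rw [Finset.sum_congr rfl hz0, Finset.sum_const_zero, Matrix.one_apply,
        if_neg (fun h => hji (by rw [h]))]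
  have hNE : N * E = 1 := mul_eq_one_comm.mp hEN
  -- factorization of the meet matrix
  have hMS : (Matrix.of fun i j => f (x i ⊓ x j)) = E * Matrix.diagonal d * Eᵀ := by
    ext i j
    rw [Matrix.mul_apply]
    have hterm : ∀ k, (E * Matrix.diagonal d) i k * Eᵀ k j
        = if x k ≤ x i ⊓ x j then g (x k) else 0 := by
      intro k
      rw [Matrix.mul_diagonal, Matrix.transpose_apply]
      simp only [hE, Matrix.of_apply]
      by_cases h1 : x k ≤ x i <;> by_cases h2 : x k ≤ x j <;>
        simp [h1, h2, le_inf_iff, hdg k]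
    rw [Finset.sum_congr rfl (fun k _ => hterm k), ← Finset.sum_filter,
      hsumtr (x i ⊓ x j) i inf_le_left g, hginv]
    rfl
  set MJ : Matrix (Fin n) (Fin n) ℂ := Matrix.of fun i j => f (x i ⊔ x j) with hMJ
  set u : Fin n → ℂ := Eᵀ.mulVec v with huu
  have hNEt : Nᵀ * Eᵀ = 1 := by rw [← Matrix.transpose_mul, hEN, Matrix.transpose_one]
  have hvu : Nᵀ.mulVec u = v := by
    rw [huu, Matrix.mulVec_mulVec, hNEt, Matrix.one_mulVec]
  have hu0 : u ≠ 0 := fun h => hv (by rw [← hvu, h, Matrix.mulVec_zero])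
  set B : Matrix (Fin n) (Fin n) ℂ := N * MJ * Nᵀ with hB
  have hBu : B.mulVec u = lam • ((Matrix.diagonal d).mulVec u) := by
    have h1 : B.mulVec u = N.mulVec (MJ.mulVec v) := by
      rw [hB, huu, Matrix.mulVec_mulVec, Matrix.mul_assoc (N * MJ) Nᵀ Eᵀ, hNEt,
        Matrix.mul_one, Matrix.mulVec_mulVec]
    rw [h1, heig, Matrix.mulVec_smul, hMS]
    congr 1
    rw [huu, Matrix.mulVec_mulVec, Matrix.mulVec_mulVec, ← Matrix.mul_assoc, ← Matrix.mul_assoc,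
      hNE, Matrix.one_mul]
  set A : Matrix (Fin n) (Fin n) ℂ := Matrix.of fun i j => (d i)⁻¹ * B i j with hA
  have hAu : A.mulVec u = lam • u := by
    funext i
    have hBi := congrFun hBu i
    rw [Pi.smul_apply, Matrix.mulVec_diagonal, smul_eq_mul] at hBi
    simp only [Matrix.mulVec, dotProduct, Pi.smul_apply, smul_eq_mul] at hBi ⊢
    simp only [hA, Matrix.of_apply, mul_assoc, ← Finset.mul_sum]
    rw [hBi]
    field_simp [hd0 i]
  have hev : Module.End.HasEigenvalue (Matrix.toLin' A) lam :=
    Module.End.hasEigenvalue_of_hasEigenvector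
      ⟨Module.End.mem_eigenspace_iff.mpr (by rw [Matrix.toLin'_apply, hAu]), hu0⟩
  obtain ⟨i, hi⟩ := eigenvalue_mem_ball hev
  refine ⟨i, ?_⟩
  rw [Metric.mem_closedBall] at hi
  have hBentry : ∀ i j : Fin n, B i j = ∑ α : Fin n, ∑ β : Fin n,
      mu (x α) (x i) * mu (x β) (x j) * f (x α ⊔ x β) := by
    intro i j
    rw [hB]
    simp only [Matrix.mul_apply, Matrix.transpose_apply, hN, hMJ, Matrix.of_apply,
      Finset.sum_mul]
    rw [Finset.sum_comm]
    refine Finset.sum_congr rfl (fun α _ => Finset.sum_congr rfl (fun β _ => by ring))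
  have hcenter : (d i)⁻¹ * (∑ α : Fin n, ∑ β : Fin n,
      mu (x α) (x i) * mu (x β) (x i) * f (x α ⊔ x β)) = A i i := by
    rw [hA, Matrix.of_apply, hBentry]
  rw [hcenter, ← Complex.dist_eq]
  refine hi.trans (le_of_eq ?_)
  rw [Finset.mul_sum]
  refine Finset.sum_congr rfl (fun j hj => ?_)
  rw [hA, Matrix.of_apply, hBentry, norm_mul, norm_inv]
end
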